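/- arXiv:2502.15206 — 10 statements merged into one kernel-verified Lean document; each statement's English description precedes it below -/
import Mathlib

section
/- Let n ≥ 1, let Q, H ∈ S^n, and let 𝓑 ⊆ S^n. Assume J_+(𝓑) is rank-one generated, i.e. J_+(𝓑) = convexHull(J_+(𝓑) ∩ Γ^n). Define the SDP value set S = {Q•X : X ∈ J_+(𝓑), H•X = 1} and the QCQP value set T = {Q•X : X ∈ Γ^n ∩ J_+(𝓑), H•X = 1}. If S is nonempty and bounded below, then T is nonempty and inf T = inf S. -/
open Matrix

namespace SdpROGAux

variable {n : ℕ}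

/-- trace inner product as a double sum -/
noncomputable def ip (A X : Matrix (Fin n) (Fin n) ℝ) : ℝ := ∑ i, ∑ j, A i j * X i j

lemma ip_smul (A : Matrix (Fin n) (Fin n) ℝ) (c : ℝ) (X : Matrix (Fin n) (Fin n) ℝ) :
    ip A (c • X) = c * ip A X := by
  simp [ip, Matrix.smul_apply, Finset.mul_sum, mul_left_comm]

lemma ip_add (A X Y : Matrix (Fin n) (Fin n) ℝ) :
    ip A (X + Y) = ip A X + ip A Y := by
  simp [ip, Matrix.add_apply, mul_add, Finset.sum_add_distrib]

lemma ip_sum {ι : Type*} (A : Matrix (Fin n) (Fin n) ℝ) (s : Finset ι)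
    (M : ι → Matrix (Fin n) (Fin n) ℝ) :
    ip A (∑ i ∈ s, M i) = ∑ i ∈ s, ip A (M i) := by
  induction s using Finset.cons_induction with
  | empty => simp [ip]
  | cons i s hi ih => simp [Finset.sum_cons, ip_add, ih]

lemma psd_smul {c : ℝ} (hc : 0 ≤ c) {X : Matrix (Fin n) (Fin n) ℝ}
    (hX : X.PosSemidef) : (c • X).PosSemidef := by
  constructor
  · show (c • X)ᴴ = c • X
    rw [conjTranspose_smul, star_trivial, hX.1.eq]
  · intro x
    exact (hX.smul hc).2 x

lemma smul_vecMulVec {c : ℝ} (hc : 0 ≤ c) (x : Fin n → ℝ) :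
    c • vecMulVec x x = vecMulVec (Real.sqrt c • x) (Real.sqrt c • x) := by
  ext i j
  simp only [Matrix.smul_apply, vecMulVec_apply, Pi.smul_apply, smul_eq_mul]
  have h : Real.sqrt c * (x i) * (Real.sqrt c * (x j)) = (Real.sqrt c * Real.sqrt c) * (x i * x j) := by ring
  rw [h, Real.mul_self_sqrt hc]

end SdpROGAux

open SdpROGAux

/-- If `J₊(𝓑)` is rank-one generated, then whenever the SDP value set `S`
is nonempty and bounded below, the QCQP value set `T` is nonempty and `inf T = inf S`. -/
theorem sdp_relaxation_exact_of_ROG (n : ℕ) (hn : 1 ≤ n)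
    (Q H : Matrix (Fin n) (Fin n) ℝ) (hQ : Q.IsSymm) (hH : H.IsSymm)
    (𝓑 : Set (Matrix (Fin n) (Fin n) ℝ)) (h𝓑 : ∀ B ∈ 𝓑, B.IsSymm)
    (Jplus : Set (Matrix (Fin n) (Fin n) ℝ))
    (hJ : Jplus = {X | X.PosSemidef ∧ ∀ B ∈ 𝓑, 0 ≤ ∑ i, ∑ j, B i j * X i j})
    (Γ : Set (Matrix (Fin n) (Fin n) ℝ))
    (hΓ : Γ = {X | ∃ x : Fin n → ℝ, X = vecMulVec x x})
    (hROG : Jplus = convexHull ℝ (Jplus ∩ Γ))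
    (S T : Set ℝ)
    (hS : S = {v | ∃ X ∈ Jplus, (∑ i, ∑ j, H i j * X i j) = 1 ∧
      v = ∑ i, ∑ j, Q i j * X i j})
    (hT : T = {v | ∃ X ∈ Γ ∩ Jplus, (∑ i, ∑ j, H i j * X i j) = 1 ∧
      v = ∑ i, ∑ j, Q i j * X i j})
    (hne : S.Nonempty) (hbdd : BddBelow S) :
    T.Nonempty ∧ sInf T = sInf S := by
  classical
  -- membership in S/T rephrased via ip
  have hSip : S = {v | ∃ X ∈ Jplus, ip H X = 1 ∧ v = ip Q X} := hS
  have hTip : T = {v | ∃ X ∈ Γ ∩ Jplus, ip H X = 1 ∧ v = ip Q X} := hT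
  -- Jplus is closed under nonnegative scaling and addition
  have hJsmul : ∀ (c : ℝ), 0 ≤ c → ∀ X ∈ Jplus, c • X ∈ Jplus := by
    intro c hc X hX
    rw [hJ] at hX ⊢
    refine ⟨psd_smul hc hX.1, fun B hB => ?_⟩
    have h1 : (∑ i, ∑ j, B i j * (c • X) i j) = c * ∑ i, ∑ j, B i j * X i j :=
      ip_smul B c X
    rw [h1]
    exact mul_nonneg hc (hX.2 B hB)
  have hJadd : ∀ X ∈ Jplus, ∀ Y ∈ Jplus, X + Y ∈ Jplus := by
    intro X hX Y hY
    rw [hJ] at hX hY ⊢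
    refine ⟨hX.1.add hY.1, fun B hB => ?_⟩
    have h1 : (∑ i, ∑ j, B i j * (X + Y) i j)
        = (∑ i, ∑ j, B i j * X i j) + ∑ i, ∑ j, B i j * Y i j := ip_add B X Y
    rw [h1]
    exact add_nonneg (hX.2 B hB) (hY.2 B hB)
  -- key claim
  have key : ∀ ε : ℝ, 0 < ε → ∃ v ∈ T, v ≤ sInf S + ε := by
    intro ε hε
    obtain ⟨v, hvS, hvm⟩ := exists_lt_of_csInf_lt hne
      (lt_add_of_pos_right (sInf S) hε)
    rw [hSip] at hvS
    obtain ⟨X, hXJ, hHX, hvQ⟩ := hvS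
    set m : ℝ := sInf S + ε with hm
    have hQX : ip Q X < m := hvQ ▸ hvm
    have hbX : ∀ b ∈ lowerBounds S, b ≤ ip Q X := by
      intro b hb
      have : v ∈ S := by
        rw [hSip]; exact ⟨X, hXJ, hHX, hvQ⟩
      have := hb this
      linarith [hvQ ▸ this]
    have hXc : X ∈ convexHull ℝ (Jplus ∩ Γ) := hROG ▸ hXJ
    rw [mem_convexHull_iff_exists_fintype] at hXc
    obtain ⟨ι, _, w, z, hw0, hw1, hzs, hzx⟩ := hXc
    set Y : ι → Matrix (Fin n) (Fin n) ℝ := fun i => w i • z i with hYdef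
    set β : ι → ℝ := fun i => ip H (Y i) with hβdef
    set q : ι → ℝ := fun i => ip Q (Y i) with hqdef
    have hYJ : ∀ i, Y i ∈ Jplus := fun i => hJsmul (w i) (hw0 i) (z i) (hzs i).1
    have hβsum : ∑ i, β i = 1 := by
      have : ip H X = 1 := hHX
      rw [← this, ← hzx, ip_sum]
    have hqsum : ∑ i, q i = ip Q X := by
      rw [← hzx, ip_sum]
    -- Claim B: pieces with nonpositive H-value
    have claimB : ∀ i, β i ≤ 0 → m * β i ≤ q i := by
      intro i hβi
      by_contra hlt
      push_neg at hlt
      have hc : q i - β i * ip Q X < 0 := by nlinarith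
      obtain ⟨b, hb⟩ := hbdd
      set c : ℝ := q i - β i * ip Q X with hcdef
      set t : ℝ := (b - 1 - ip Q X) / c with htdef
      have hbX' : b ≤ ip Q X := hbX b hb
      have ht : 0 ≤ t := le_of_lt (div_pos_of_neg_of_neg (by linarith) hc)
      set Z : Matrix (Fin n) (Fin n) ℝ := (1 - t * β i) • X + t • Y i with hZdef
      have h1tβ : 0 ≤ 1 - t * β i := by nlinarith
      have hZJ : Z ∈ Jplus :=
        hJadd _ (hJsmul _ h1tβ X hXJ) _ (hJsmul _ ht (Y i) (hYJ i))
      have hHZ : ip H Z = 1 := by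
        rw [hZdef, ip_add, ip_smul, ip_smul, hHX]
        show (1 - t * β i) * 1 + t * β i = 1
        ring
      have hQZ : ip Q Z = ip Q X + t * c := by
        rw [hZdef, ip_add, ip_smul, ip_smul, hcdef]
        show (1 - t * β i) * ip Q X + t * q i = ip Q X + t * (q i - β i * ip Q X)
        ring
      have htc : t * c = b - 1 - ip Q X := by
        rw [htdef, div_mul_cancel₀ _ (ne_of_lt hc)]
      have hZS : ip Q Z ∈ S := by
        rw [hSip]; exact ⟨Z, hZJ, hHZ, rfl⟩
      have := hb hZS
      rw [hQZ, htc] at this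
      linarith
    -- counting argument
    set P : Finset ι := Finset.univ.filter (fun i => 0 < β i) with hPdef
    have hPne : P.Nonempty := by
      by_contra h
      rw [Finset.not_nonempty_iff_eq_empty] at h
      have hall : ∀ i, β i ≤ 0 := by
        intro i
        by_contra hi
        push_neg at hi
        have : i ∈ P := by rw [hPdef]; simp [hi]
        rw [h] at this
        exact absurd this (Finset.notMem_empty i)
      have : (∑ i, β i) ≤ 0 := Finset.sum_nonpos (fun i _ => hall i)
      rw [hβsum] at this
      linarith
    have htot : ∑ i, (q i - m * β i) ≤ 0 := by
      rw [Finset.sum_sub_distrib, ← Finset.mul_sum, hqsum, hβsum]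
      linarith
    have hsub : ∑ i ∈ P, (q i - m * β i) ≤ ∑ i, (q i - m * β i) := by
      apply Finset.sum_le_sum_of_subset_of_nonneg (Finset.subset_univ P)
      intro i _ hiP
      have hβi : β i ≤ 0 := by
        by_contra hi
        push_neg at hi
        exact hiP (by rw [hPdef]; simp [hi])
      linarith [claimB i hβi]
    have hzero : ∑ i ∈ P, (q i - m * β i) ≤ ∑ i ∈ P, (0 : ℝ) := by
      rw [Finset.sum_const, smul_zero]
      exact le_trans hsub htot
    obtain ⟨i, hiP, hile⟩ := Finset.exists_le_of_sum_le hPne hzero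
    have hβi : 0 < β i := by
      have := Finset.mem_filter.mp hiP
      exact this.2
    have hqi : q i ≤ m * β i := by linarith
    -- build rank-one feasible point
    have hzΓ : z i ∈ Γ := (hzs i).2
    rw [hΓ] at hzΓ
    obtain ⟨x, hx⟩ := hzΓ
    set c : ℝ := (β i)⁻¹ * w i with hcdef
    have hwipos : 0 < w i := by
      rcases lt_or_eq_of_le (hw0 i) with h | h
      · exact h
      · exfalso
        have : Y i = 0 := by rw [hYdef]; simp [← h]
        have : β i = 0 := by rw [hβdef]; simp [this, ip]
        linarith
    have hc0 : 0 ≤ c := le_of_lt (mul_pos (inv_pos.mpr hβi) hwipos)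
    set W : Matrix (Fin n) (Fin n) ℝ := c • z i with hWdef
    have hWY : W = (β i)⁻¹ • Y i := by
      rw [hWdef, hYdef, hcdef, smul_smul]
    have hWJ : W ∈ Jplus := hJsmul c hc0 (z i) (hzs i).1
    have hWΓ : W ∈ Γ := by
      rw [hΓ]
      refine ⟨Real.sqrt c • x, ?_⟩
      rw [hWdef, hx, smul_vecMulVec hc0]
    have hHW : ip H W = 1 := by
      rw [hWY, ip_smul]
      show (β i)⁻¹ * β i = 1
      exact inv_mul_cancel₀ (ne_of_gt hβi)
    have hQW : ip Q W ≤ m := by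
      rw [hWY, ip_smul]
      have h := mul_le_mul_of_nonneg_left hqi (le_of_lt (inv_pos.mpr hβi))
      calc (β i)⁻¹ * q i ≤ (β i)⁻¹ * (m * β i) := h
        _ = m := by
          rw [mul_comm m, ← mul_assoc, inv_mul_cancel₀ (ne_of_gt hβi), one_mul]
    exact ⟨ip Q W, by rw [hTip]; exact ⟨W, ⟨hWΓ, hWJ⟩, hHW, rfl⟩, hQW⟩
  -- conclude
  obtain ⟨v0, hv0T, _⟩ := key 1 one_pos
  have hTS : T ⊆ S := by
    rw [hSip, hTip]
    rintro v ⟨X, ⟨_, hXJ⟩, h1, h2⟩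
    exact ⟨X, hXJ, h1, h2⟩
  have hTbdd : BddBelow T := hbdd.mono hTS
  have le1 : sInf S ≤ sInf T := csInf_le_csInf hbdd ⟨v0, hv0T⟩ hTS
  have le2 : sInf T ≤ sInf S := by
    apply le_of_forall_pos_le_add
    intro ε hε
    obtain ⟨v, hvT, hv⟩ := key ε hε
    exact le_trans (csInf_le hTbdd hvT) hv
  exact ⟨⟨v0, hv0T⟩, le_antisymm le2 le1⟩
end

section
/- Let n ≥ 2 and let 𝓑 ⊆ S^n satisfy Condition (B)' (for every pair of distinct A, B ∈ 𝓑, A_< ∩ B_≤ = ∅) and Condition (C)' (B_< ≠ ∅ for every B ∈ 𝓑). Then J_+(𝓑) is rank-one generated: J_+(𝓑) = convexHull(J_+(𝓑) ∩ Γ^n). -/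
open Matrix Set
open scoped MatrixOrder

attribute [local instance] Matrix.normedAddCommGroup Matrix.normedSpace

variable {N : ℕ}


private def qf {N : ℕ} (M : Matrix (Fin N) (Fin N) ℝ) (x : Fin N → ℝ) : ℝ := x ⬝ᵥ M.mulVec x

private lemma qf_smul {N : ℕ} (M : Matrix (Fin N) (Fin N) ℝ) (c : ℝ) (x : Fin N → ℝ) :
    qf M (c • x) = c^2 * qf M x := by
  simp [qf, Matrix.mulVec_smul, dotProduct_smul, smul_dotProduct]
  ring

private lemma qf_cont (M : Matrix (Fin N) (Fin N) ℝ) : Continuous fun x => qf M x := by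
  unfold qf dotProduct Matrix.mulVec
  refine continuous_finset_sum _ fun i _ => (continuous_apply i).mul ?_
  exact continuous_finset_sum _ fun j _ => (continuous_const.mul (continuous_apply j))

private lemma qf_comb (M : Matrix (Fin N) (Fin N) ℝ) (a c : ℝ) (x y : Fin N → ℝ) :
    qf M (a • x + c • y) = a^2 * qf M x
      + (a*c) * (x ⬝ᵥ M.mulVec y + y ⬝ᵥ M.mulVec x) + c^2 * qf M y := by
  simp [qf, Matrix.mulVec_add, Matrix.mulVec_smul, dotProduct_add,
    add_dotProduct, dotProduct_smul, smul_dotProduct]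
  ring

private lemma qf_expand {N : ℕ} (M : Matrix (Fin N) (Fin N) ℝ) (a x : Fin N → ℝ) (t : ℝ) :
    qf M (a + t • x) =
      qf M x * t^2 + (a ⬝ᵥ M.mulVec x + x ⬝ᵥ M.mulVec a) * t + qf M a := by
  simp [qf, Matrix.mulVec_add, Matrix.mulVec_smul, dotProduct_add,
    add_dotProduct, dotProduct_smul, smul_dotProduct]
  ring

private lemma ev_neg {qa : ℝ} (qb qc : ℝ) (h : qa < 0) :
    ∃ T : ℝ, ∀ t, T ≤ t → qa * t^2 + qb * t + qc < 0 := by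
  refine ⟨max 1 ((|qb| + |qc| + 1) / (-qa)), fun t ht => ?_⟩
  have h1 : (1:ℝ) ≤ t := le_trans (le_max_left _ _) ht
  have h2 : (|qb| + |qc| + 1) / (-qa) ≤ t := le_trans (le_max_right _ _) ht
  have hna : (0:ℝ) < -qa := by linarith
  have h3 : |qb| + |qc| + 1 ≤ (-qa) * t := by
    rw [div_le_iff₀ hna] at h2; linarith [h2]
  have hb : qb ≤ |qb| := le_abs_self qb
  have hc : qc ≤ |qc| := le_abs_self qc
  nlinarith [abs_nonneg qb, abs_nonneg qc]

private lemma exclusivity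
    (𝓑 : Set (Matrix (Fin (m + 1)) (Fin (m + 1)) ℝ))
    (hB' : ∀ A ∈ 𝓑, ∀ B ∈ 𝓑, A ≠ B → ∀ u : Fin m → ℝ,
      ¬((Fin.snoc u 1) ⬝ᵥ A.mulVec (Fin.snoc u 1) < 0 ∧
        (Fin.snoc u 1) ⬝ᵥ B.mulVec (Fin.snoc u 1) ≤ 0))
    (hC' : ∀ B ∈ 𝓑, ∃ u : Fin m → ℝ, (Fin.snoc u 1) ⬝ᵥ B.mulVec (Fin.snoc u 1) < 0)
    {A B : Matrix (Fin (m + 1)) (Fin (m + 1)) ℝ} (hA : A ∈ 𝓑) (hB : B ∈ 𝓑) (hAB : A ≠ B)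
    (x : Fin (m + 1) → ℝ) (hqa : qf A x < 0) : 0 ≤ qf B x := by
  by_contra hqb
  push_neg at hqb
  by_cases hc : x (Fin.last m) = 0
  · -- x = snoc x' 0 ; use hC' to get a base point, travel to infinity
    set x' : Fin m → ℝ := fun i => x i.castSucc with hx'
    obtain ⟨u₀, hu₀⟩ := hC' A hA
    set a : Fin (m+1) → ℝ := Fin.snoc u₀ 1 with ha
    have hqa' : qf A a < 0 := hu₀
    obtain ⟨TA, hTA⟩ := ev_neg (a ⬝ᵥ A.mulVec x + x ⬝ᵥ A.mulVec a) (qf A a) hqa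
    obtain ⟨TB, hTB⟩ := ev_neg (a ⬝ᵥ B.mulVec x + x ⬝ᵥ B.mulVec a) (qf B a) hqb
    set t : ℝ := max TA TB with hT
    have hsnoc : Fin.snoc (u₀ + t • x') (1:ℝ) = a + t • x := by
      funext i
      refine Fin.lastCases ?_ (fun j => ?_) i
      · simp [ha, hc]
      · simp [ha, hx']
    refine hB' A hA B hB hAB (u₀ + t • x') ⟨?_, le_of_lt ?_⟩
    · show qf A _ < 0
      rw [hsnoc, qf_expand]
      exact hTA t (le_max_left _ _)
    · show qf B _ < 0
      rw [hsnoc, qf_expand]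
      exact hTB t (le_max_right _ _)
  · -- scale so that last coordinate is 1
    set c : ℝ := x (Fin.last m) with hcdef
    set u : Fin m → ℝ := fun i => x i.castSucc / c with hu
    have hsnoc : Fin.snoc u (1:ℝ) = c⁻¹ • x := by
      funext i
      refine Fin.lastCases ?_ (fun j => ?_) i
      · simp [Pi.smul_apply, ← hcdef, inv_mul_cancel₀ hc]
      · simp [hu, Pi.smul_apply, div_eq_inv_mul]
    have hc2 : (0:ℝ) < (c⁻¹)^2 := by positivity
    refine hB' A hA B hB hAB u ⟨?_, le_of_lt ?_⟩
    · show qf A _ < 0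
      rw [hsnoc, qf_smul]
      exact mul_neg_of_pos_of_neg hc2 hqa
    · show qf B _ < 0
      rw [hsnoc, qf_smul]
      exact mul_neg_of_pos_of_neg hc2 hqb

private lemma vecMulVec_comb (a c : ℝ) (x y : Fin N → ℝ) :
    vecMulVec (a • x + c • y) (a • x + c • y)
      = (a^2) • vecMulVec x x + (a*c) • (vecMulVec x y + vecMulVec y x)
        + (c^2) • vecMulVec y y := by
  ext i j
  simp [Matrix.vecMulVec_apply, Matrix.add_apply, Matrix.smul_apply]
  ring

private lemma vecMulVec_smul_self (r : ℝ) (x : Fin N → ℝ) :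
    vecMulVec (r • x) (r • x) = (r^2) • vecMulVec x x := by
  ext i j; simp [Matrix.vecMulVec_apply]; ring

private lemma vecMulVec_zero_zero :
    vecMulVec (0 : Fin N → ℝ) (0 : Fin N → ℝ) = (0 : Matrix (Fin N) (Fin N) ℝ) := by
  ext i j; simp [Matrix.vecMulVec_apply]

private lemma one_eq_sum_single :
    (1 : Matrix (Fin N) (Fin N) ℝ)
      = ∑ i, vecMulVec (Pi.single i (1:ℝ)) (Pi.single i 1) := by
  ext a b
  simp only [Matrix.sum_apply, Matrix.vecMulVec_apply, Pi.single_apply, Matrix.one_apply]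
  by_cases h : a = b
  · subst h
    rw [Finset.sum_eq_single a]
    · simp
    · intro i _ hia; simp [hia.symm]
    · simp
  · rw [Finset.sum_eq_zero]
    · simp [h]
    · intro i _
      by_cases hia : a = i
      · subst hia
        have : ¬ b = a := fun hb => h hb.symm
        simp [this]
      · simp [hia]

private lemma sum_extend_zero {ι κ M : Type*} [Fintype ι] [Fintype κ] [DecidableEq κ]
    [AddCommMonoid M] (e : ι ↪ κ) (F : κ → M) (hF : ∀ j, (∀ i, e i ≠ j) → F j = 0) :
    ∑ j, F j = ∑ i, F (e i) := by
  classical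
  rw [← Finset.sum_image (f := F) (g := e)
      (by intro a _ b _ h; exact e.injective h)]
  refine (Finset.sum_subset (Finset.subset_univ _) ?_).symm
  intro j _ hj
  refine hF j fun i hi => hj ?_
  exact Finset.mem_image.2 ⟨i, Finset.mem_univ _, hi⟩

private lemma isCompact_convexHull' {E : Type*} [NormedAddCommGroup E] [NormedSpace ℝ E]
    [FiniteDimensional ℝ E] {s : Set E} (hs : IsCompact s) :
    IsCompact (convexHull ℝ s) := by
  classical
  rcases s.eq_empty_or_nonempty with rfl | ⟨x₀, hx₀⟩
  · simp [convexHull_empty, isCompact_empty]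
  · set D : ℕ := Module.finrank ℝ E + 1 with hD
    set T : (Fin D → ℝ) × (Fin D → E) → E := fun p => ∑ i, p.1 i • p.2 i with hT
    have key : convexHull ℝ s = T '' ((stdSimplex ℝ (Fin D)) ×ˢ (univ.pi fun _ => s)) := by
      apply Subset.antisymm
      · intro x hx
        obtain ⟨ι, hι, z, w, hzs, hindep, hw0, hw1, hwz⟩ :=
          eq_pos_convex_span_of_mem_convexHull hx
        have hcard : Fintype.card ι ≤ D := by
          have h1 := hindep.card_le_finrank_succ
          have h2 := Submodule.finrank_le (vectorSpan ℝ (range z))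
          omega
        obtain ⟨e⟩ : Nonempty (ι ↪ Fin D) := by
          have : Fintype.card ι ≤ Fintype.card (Fin D) := by simpa using hcard
          exact Function.Embedding.nonempty_of_card_le this
        set w' : Fin D → ℝ := Function.extend e w 0 with hw'
        set z' : Fin D → E := Function.extend e z (fun _ => x₀) with hz'
        have hwe : ∀ i, w' (e i) = w i := fun i => e.injective.extend_apply w 0 i
        have hze : ∀ i, z' (e i) = z i := fun i => e.injective.extend_apply z _ i
        have hnr : ∀ j : Fin D, (∀ i, e i ≠ j) → w' j = 0 := by
          intro j hj
          rw [hw', Function.extend_apply' _ _ _ (by rintro ⟨i, hi⟩; exact hj i hi)]; rfl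
        have hw'0 : ∀ j, 0 ≤ w' j := by
          intro j
          by_cases hj : ∃ i, e i = j
          · obtain ⟨i, rfl⟩ := hj; rw [hwe]; exact (hw0 i).le
          · push_neg at hj; rw [hnr j hj]
        refine ⟨(w', z'), ⟨⟨hw'0, ?_⟩, ?_⟩, ?_⟩
        · rw [sum_extend_zero e w' hnr]
          rw [← hw1]; exact Finset.sum_congr rfl fun i _ => hwe i
        · intro j _
          show z' j ∈ s
          by_cases hj : ∃ i, e i = j
          · obtain ⟨i, rfl⟩ := hj; rw [hze]; exact hzs ⟨i, rfl⟩
          · push_neg at hj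
            rw [hz', Function.extend_apply' _ _ _ (by rintro ⟨i, hi⟩; exact hj i hi)]
            exact hx₀
        · show ∑ j, w' j • z' j = x
          rw [sum_extend_zero e (fun j => w' j • z' j)
            (fun j hj => by show w' j • z' j = 0; rw [hnr j hj, zero_smul])]
          rw [← hwz]
          exact Finset.sum_congr rfl fun i _ => by rw [hwe, hze]
      · rintro x ⟨⟨lam, z⟩, ⟨hlam, hz⟩, rfl⟩
        have hmem : ∀ i ∈ Finset.univ, z i ∈ s := fun i _ => hz i (mem_univ i)
        have h := Finset.centerMass_mem_convexHull (Finset.univ) (fun i _ => hlam.1 i)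
          (by rw [hlam.2]; norm_num) hmem
        rwa [Finset.centerMass_eq_of_sum_1 _ _ hlam.2] at h
    rw [key]
    apply IsCompact.image
    · exact (isCompact_stdSimplex _ _).prod (isCompact_univ_pi fun _ => hs)
    · exact continuous_finset_sum _ fun i _ =>
        ((continuous_apply i).comp continuous_fst).smul ((continuous_apply i).comp continuous_snd)

private lemma spectral_package {G : Matrix (Fin N) (Fin N) ℝ} (hG : G.IsSymm) :
    ∃ (lam : Fin N → ℝ) (v : Fin N → (Fin N → ℝ)),
      (∀ i j, (v i) ⬝ᵥ G.mulVec (v j) = if i = j then lam i else 0) ∧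
      (∑ i, vecMulVec (v i) (v i) = (1 : Matrix (Fin N) (Fin N) ℝ)) ∧
      (∑ i, lam i = G.trace) := by
  have hH : G.IsHermitian := by
    rw [Matrix.IsHermitian, conjTranspose_eq_transpose_of_trivial]; exact hG
  set U : Matrix (Fin N) (Fin N) ℝ := (hH.eigenvectorUnitary : Matrix (Fin N) (Fin N) ℝ) with hU
  have hUmem := hH.eigenvectorUnitary.2
  have hUUt : U * Uᵀ = 1 := by
    have := (Matrix.mem_unitaryGroup_iff).mp hUmem
    rwa [Matrix.star_eq_conjTranspose, conjTranspose_eq_transpose_of_trivial] at this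
  have hUtU : Uᵀ * U = 1 := by
    have := (Matrix.mem_unitaryGroup_iff').mp hUmem
    rwa [Matrix.star_eq_conjTranspose, conjTranspose_eq_transpose_of_trivial] at this
  have hspec : G = U * Matrix.diagonal hH.eigenvalues * Uᵀ := by
    have := hH.spectral_theorem
    rwa [Unitary.conjStarAlgAut_apply, Matrix.star_eq_conjTranspose, conjTranspose_eq_transpose_of_trivial,
      show (RCLike.ofReal ∘ hH.eigenvalues : Fin N → ℝ) = hH.eigenvalues from rfl] at this
  refine ⟨hH.eigenvalues, fun i => fun k => U k i, ?_, ?_, ?_⟩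
  · intro i j
    have key : (Uᵀ * G * U) = Matrix.diagonal hH.eigenvalues := by
      conv_lhs => rw [hspec]
      calc Uᵀ * (U * Matrix.diagonal hH.eigenvalues * Uᵀ) * U
          = (Uᵀ * U) * Matrix.diagonal hH.eigenvalues * (Uᵀ * U) := by
            simp only [Matrix.mul_assoc]
        _ = Matrix.diagonal hH.eigenvalues := by rw [hUtU]; simp
    have h1 : (Uᵀ * G * U) i j = (fun k => U k i) ⬝ᵥ G.mulVec (fun k => U k j) := by
      simp only [Matrix.mul_apply, dotProduct, Matrix.mulVec, Matrix.transpose_apply,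
        Finset.sum_mul, Finset.mul_sum]
      rw [Finset.sum_comm]
      exact Finset.sum_congr rfl fun k _ => Finset.sum_congr rfl fun l _ => by ring
    rw [← h1, key, Matrix.diagonal_apply]
  · ext k l
    have : (∑ i, vecMulVec (fun k => U k i) (fun k => U k i)) k l = (U * Uᵀ) k l := by
      simp [Matrix.sum_apply, Matrix.vecMulVec_apply, Matrix.mul_apply]
    rw [this, hUUt]
  · have : G.trace = (U * Matrix.diagonal hH.eigenvalues * Uᵀ).trace := by rw [← hspec]
    rw [this, Matrix.trace_mul_cycle, hUtU, Matrix.one_mul, Matrix.trace_diagonal]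

private lemma no_separation (𝓖 : Set (Matrix (Fin N) (Fin N) ℝ))
    (hsymm : ∀ G ∈ 𝓖, G.IsSymm)
    (htr : ∀ G ∈ 𝓖, 0 ≤ G.trace)
    (hexcl : ∀ F ∈ 𝓖, ∀ G ∈ 𝓖, F ≠ G → ∀ x, qf F x < 0 → 0 ≤ qf G x)
    (f : Matrix (Fin N) (Fin N) ℝ →L[ℝ] ℝ)
    (hgood : ∀ w : Fin N → ℝ, (∀ G ∈ 𝓖, 0 ≤ qf G w) → f (vecMulVec w w) ≤ 0)
    (hf1 : 0 < f 1) : False := by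
  classical
  -- some coordinate vector has positive f-value
  have hsum1 : (∑ i, f (vecMulVec (Pi.single i (1:ℝ)) (Pi.single i 1))) = f 1 := by
    rw [one_eq_sum_single]; exact (map_sum f _ _).symm
  have hx₀ : ∃ x₀ : Fin N → ℝ, 0 < f (vecMulVec x₀ x₀) := by
    by_contra hall
    push_neg at hall
    have : (∑ i, f (vecMulVec (Pi.single i (1:ℝ)) (Pi.single i 1))) ≤ 0 :=
      Finset.sum_nonpos fun i _ => hall _
    rw [hsum1] at this; linarith
  obtain ⟨x₀, hx₀pos⟩ := hx₀
  have hx₀bad : ∃ G₀ ∈ 𝓖, qf G₀ x₀ < 0 := by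
    by_contra hng
    push_neg at hng
    exact absurd (hgood x₀ hng) (not_le.2 hx₀pos)
  obtain ⟨G₀, hG₀mem, hG₀neg⟩ := hx₀bad
  -- key step : positivity of f on yyᵀ forces G₀-negativity of y
  have key : ∀ y : Fin N → ℝ, 0 < f (vecMulVec y y) → qf G₀ y < 0 := by
    intro y hy
    set b : ℝ := f (vecMulVec x₀ y) + f (vecMulVec y x₀) with hb
    set σ : ℝ := if 0 ≤ b then 1 else -1 with hσ
    have hσb : 0 ≤ σ * b := by
      rcases le_or_gt 0 b with h | h
      · rw [hσ, if_pos h]; linarith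
      · rw [hσ, if_neg (not_le.2 h)]; linarith
    have hσ2 : σ^2 = 1 := by
      by_cases h : 0 ≤ b <;> simp [hσ, h]
    set p : ℝ → (Fin N → ℝ) := fun t => (1 - t) • x₀ + (t * σ) • y with hp
    have hppos : ∀ t ∈ Icc (0:ℝ) 1, 0 < f (vecMulVec (p t) (p t)) := by
      intro t ht
      obtain ⟨ht0, ht1⟩ := ht
      have hexp : f (vecMulVec (p t) (p t)) =
          (1-t)^2 * f (vecMulVec x₀ x₀) + ((1-t)*(t*σ)) * b
            + (t*σ)^2 * f (vecMulVec y y) := by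
        rw [hp]
        simp only [vecMulVec_comb, map_add, _root_.map_smul, smul_eq_mul, hb]
      rw [hexp]
      have h1 : (t*σ)^2 = t^2 := by rw [mul_pow, hσ2, mul_one]
      have h2 : ((1-t)*(t*σ))*b = ((1-t)*t)*(σ*b) := by ring
      rw [h1, h2]
      have h3 : 0 ≤ ((1-t)*t)*(σ*b) :=
        mul_nonneg (mul_nonneg (by linarith) ht0) hσb
      have e1 : 0 ≤ (1-t)^2 * f (vecMulVec x₀ x₀) := mul_nonneg (sq_nonneg _) hx₀pos.le
      have e2 : 0 ≤ t^2 * f (vecMulVec y y) := mul_nonneg (sq_nonneg _) hy.le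
      rcases le_total t (1/2) with h5 | h5
      · have h6 : (1:ℝ)/4 ≤ (1-t)^2 := by nlinarith
        nlinarith
      · have h6 : (1:ℝ)/4 ≤ t^2 := by nlinarith
        nlinarith
    -- connectivity argument on [0,1]
    set U : Set ℝ := {t | qf G₀ (p t) < 0} with hU
    set V : Set ℝ := ⋃ (G ∈ 𝓖 \ {G₀}), {t | qf G (p t) < 0} with hV
    have hpcont : Continuous p := by
      apply Continuous.add
      · exact (continuous_const.sub continuous_id).smul continuous_const
      · exact (continuous_id.mul continuous_const).smul continuous_const
    have hUopen : IsOpen U := isOpen_lt ((qf_cont G₀).comp hpcont) continuous_const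
    have hVopen : IsOpen V := by
      refine isOpen_biUnion fun G _ => ?_
      exact isOpen_lt ((qf_cont G).comp hpcont) continuous_const
    have hcover : Icc (0:ℝ) 1 ⊆ U ∪ V := by
      intro t ht
      have hnotgood : ∃ G ∈ 𝓖, qf G (p t) < 0 := by
        by_contra hng
        push_neg at hng
        exact absurd (hgood (p t) hng) (not_le.2 (hppos t ht))
      obtain ⟨G, hGmem, hGneg⟩ := hnotgood
      by_cases hGG : G = G₀
      · left
        simp only [hU, mem_setOf_eq]
        exact hGG ▸ hGneg
      · right
        exact mem_biUnion ⟨hGmem, by simp [hGG]⟩ hGneg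
    have hdisj : Icc (0:ℝ) 1 ∩ (U ∩ V) = ∅ := by
      ext t
      simp only [mem_inter_iff, mem_empty_iff_false, iff_false, not_and]
      intro _ htU htV
      obtain ⟨G, hG, htG⟩ := mem_iUnion₂.mp htV
      have hGne : G₀ ≠ G := fun h => hG.2 (by simp [h.symm])
      exact absurd (hexcl G₀ hG₀mem G hG.1 hGne (p t) htU) (not_le.2 htG)
    have h0U : (0:ℝ) ∈ U := by
      have : p 0 = x₀ := by simp [hp]
      simp only [hU, mem_setOf_eq, this]; exact hG₀neg
    have h1U : (1:ℝ) ∈ U := by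
      by_contra h1U
      have h1V : (1:ℝ) ∈ V := by
        rcases hcover (by norm_num : (1:ℝ) ∈ Icc (0:ℝ) 1) with h | h
        · exact absurd h h1U
        · exact h
      obtain ⟨t, hts, htUV⟩ := isPreconnected_Icc (a := (0:ℝ)) (b := 1) U V hUopen hVopen
        hcover ⟨0, by norm_num, h0U⟩ ⟨1, by norm_num, h1V⟩
      have : t ∈ Icc (0:ℝ) 1 ∩ (U ∩ V) := ⟨hts, htUV⟩
      rw [hdisj] at this
      exact this
    have hp1 : p 1 = σ • y := by
      funext k; simp [hp]
    have : qf G₀ (σ • y) < 0 := by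
      rw [← hp1]; exact h1U
    rwa [qf_smul, hσ2, one_mul] at this
  -- contrapositive
  have hnn : ∀ y : Fin N → ℝ, 0 ≤ qf G₀ y → f (vecMulVec y y) ≤ 0 := by
    intro y hy
    by_contra h
    push_neg at h
    exact absurd (key y h) (not_lt.2 hy)
  -- spectral decomposition of G₀
  obtain ⟨lam, v, hvGv, hsumv, hlamtr⟩ := spectral_package (hsymm G₀ hG₀mem)
  set gv : Fin N → ℝ := fun i => f (vecMulVec (v i) (v i)) with hgv
  have hgvsum : 0 < ∑ i, gv i := by
    have : (∑ i, gv i) = f 1 := by rw [← hsumv, map_sum]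
    rw [this]; exact hf1
  have hqfv : ∀ i, qf G₀ (v i) = lam i := by
    intro i; have := hvGv i i; simpa [qf] using this
  have hgvle : ∀ i, 0 ≤ lam i → gv i ≤ 0 := by
    intro i hi
    exact hnn (v i) (by rw [hqfv i]; exact hi)
  -- pairing inequality
  have pair : ∀ i j, 0 < lam i → lam j < 0 → lam i * gv j ≤ lam j * gv i := by
    intro i j hli hlj
    have hij : i ≠ j := fun h => by rw [h] at hli; linarith
    set a : ℝ := Real.sqrt (-lam j) with ha
    set c : ℝ := Real.sqrt (lam i) with hc
    have ha2 : a^2 = -lam j := Real.sq_sqrt (by linarith)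
    have hc2 : c^2 = lam i := Real.sq_sqrt (by linarith)
    have hcross : (v i) ⬝ᵥ G₀.mulVec (v j) + (v j) ⬝ᵥ G₀.mulVec (v i) = 0 := by
      rw [hvGv i j, hvGv j i]
      simp [hij, hij.symm]
    have hqzero : ∀ s : ℝ, s^2 = 1 → qf G₀ (a • v i + (s * c) • v j) = 0 := by
      intro s hs
      rw [qf_comb]
      have e1 : qf G₀ (v i) = lam i := hqfv i
      have e2 : qf G₀ (v j) = lam j := hqfv j
      rw [e1, e2]
      have : (s*c)^2 = lam i := by rw [mul_pow, hs, one_mul, hc2]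
      rw [this]
      have hc' : (v i) ⬝ᵥ G₀.mulVec (v j) = 0 := by rw [hvGv i j]; simp [hij]
      have hc'' : (v j) ⬝ᵥ G₀.mulVec (v i) = 0 := by rw [hvGv j i]; simp [hij.symm]
      rw [hc', hc'', ha2]
      ring
    set mcr : ℝ := f (vecMulVec (v i) (v j)) + f (vecMulVec (v j) (v i)) with hmcr
    have hfexp : ∀ s : ℝ, f (vecMulVec (a • v i + (s * c) • v j) (a • v i + (s * c) • v j))
        = a^2 * gv i + (a*(s*c)) * mcr + (s*c)^2 * gv j := by
      intro s
      simp only [vecMulVec_comb, map_add, _root_.map_smul, smul_eq_mul, hmcr, hgv]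
    have hle1 : a^2 * gv i + (a*(1*c)) * mcr + (1*c)^2 * gv j ≤ 0 := by
      rw [← hfexp 1]
      exact hnn _ (by rw [hqzero 1 (by norm_num)])
    have hle2 : a^2 * gv i + (a*((-1)*c)) * mcr + ((-1)*c)^2 * gv j ≤ 0 := by
      rw [← hfexp (-1)]
      exact hnn _ (by rw [hqzero (-1) (by norm_num)])
    have hsum2 : a^2 * gv i + c^2 * gv j ≤ 0 := by nlinarith [hle1, hle2]
    rw [ha2, hc2] at hsum2
    linarith
  -- final accounting
  classical
  set P : Finset (Fin N) := Finset.univ.filter (fun i => 0 ≤ lam i) with hP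
  set Ng : Finset (Fin N) := Finset.univ.filter (fun i => ¬ 0 ≤ lam i) with hNg
  have hsplit : ∀ F : Fin N → ℝ, (∑ i, F i) = (∑ i ∈ P, F i) + (∑ i ∈ Ng, F i) := by
    intro F
    rw [hP, hNg]
    exact (Finset.sum_filter_add_sum_filter_not _ _ F).symm
  have hS : (∑ i ∈ P, gv i) ≤ 0 :=
    Finset.sum_nonpos fun i hi => hgvle i (Finset.mem_filter.mp hi).2
  have htrG : 0 ≤ ∑ i, lam i := by rw [hlamtr]; exact htr G₀ hG₀mem
  by_cases hNgE : Ng = ∅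
  · have : (∑ i, gv i) ≤ 0 := by
      rw [hsplit gv, hNgE]
      simpa using hS
    linarith
  · have hNgne : Ng.Nonempty := Finset.nonempty_of_ne_empty hNgE
    have hNgneg : (∑ i ∈ Ng, lam i) < 0 :=
      Finset.sum_neg (fun i hi => not_le.1 (Finset.mem_filter.mp hi).2) hNgne
    have hΛpos : 0 < (∑ i ∈ P, lam i) := by
      have h2 := htrG
      rw [hsplit lam] at h2
      linarith
    have hclaim : ∀ j ∈ Ng, (∑ i ∈ P, lam i) * gv j ≤ lam j * (∑ i ∈ P, gv i) := by
      intro j hj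
      have hlj : lam j < 0 := not_le.1 (Finset.mem_filter.mp hj).2
      rw [Finset.sum_mul, Finset.mul_sum]
      apply Finset.sum_le_sum
      intro i hi
      have hli : 0 ≤ lam i := (Finset.mem_filter.mp hi).2
      rcases lt_or_eq_of_le hli with h | h
      · exact pair i j h hlj
      · have h0 : 0 ≤ (-lam j) * (-gv i) :=
          mul_nonneg (by linarith) (by linarith [hgvle i hli])
        rw [← h, zero_mul]
        nlinarith [h0]
    have h1 : (∑ i ∈ P, lam i) * (∑ i ∈ Ng, gv i) ≤ (∑ j ∈ Ng, lam j) * (∑ i ∈ P, gv i) := by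
      rw [Finset.mul_sum, Finset.sum_mul]
      exact Finset.sum_le_sum hclaim
    have htot : (∑ i ∈ P, lam i) * (∑ i, gv i) ≤ (∑ i, lam i) * (∑ i ∈ P, gv i) := by
      rw [hsplit gv]
      conv_rhs => rw [hsplit lam]
      rw [mul_add, add_mul]
      linarith
    have hrhs : (∑ i, lam i) * (∑ i ∈ P, gv i) ≤ 0 := by
      calc (∑ i, lam i) * (∑ i ∈ P, gv i) ≤ (∑ i, lam i) * 0 :=
            mul_le_mul_of_nonneg_left hS htrG
        _ = 0 := by ring
    have : 0 < (∑ i ∈ P, lam i) * (∑ i, gv i) := mul_pos hΛpos hgvsum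
    linarith

private lemma trace_continuous :
    Continuous fun M : Matrix (Fin N) (Fin N) ℝ => M.trace := by
  unfold Matrix.trace Matrix.diag
  exact continuous_finset_sum _ fun i _ => (continuous_apply i).comp (continuous_apply i)

private lemma sphere_lemma (hN : 0 < N) (𝓖 : Set (Matrix (Fin N) (Fin N) ℝ))
    (hsymm : ∀ G ∈ 𝓖, G.IsSymm)
    (htr : ∀ G ∈ 𝓖, 0 ≤ G.trace)
    (hexcl : ∀ F ∈ 𝓖, ∀ G ∈ 𝓖, F ≠ G → ∀ x, qf F x < 0 → 0 ≤ qf G x) :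
    ∃ (ι : Type) (t : Finset ι) (c : ι → ℝ) (w : ι → (Fin N → ℝ)),
      (∀ i ∈ t, 0 ≤ c i) ∧ (∀ i ∈ t, ∀ G ∈ 𝓖, 0 ≤ qf G (w i)) ∧
      (∑ i ∈ t, c i • vecMulVec (w i) (w i)) = (1 : Matrix (Fin N) (Fin N) ℝ) := by
  classical
  haveI : NeZero N := ⟨hN.ne'⟩
  set Good : Set (Fin N → ℝ) := {x | ∀ G ∈ 𝓖, 0 ≤ qf G x} with hGood
  set K0 : Set (Matrix (Fin N) (Fin N) ℝ) :=
    (fun w => vecMulVec w w) '' (Good ∩ Metric.sphere 0 1) with hK0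
  set CH := convexHull ℝ K0 with hCH
  set 𝒦 : Set (Matrix (Fin N) (Fin N) ℝ) :=
    {M | ∃ t : ℝ, ∃ C ∈ CH, 0 ≤ t ∧ M = t • C} ∪ {0} with h𝒦
  -- basic facts
  have hGoodClosed : IsClosed Good := by
    have : Good = ⋂ (G : Matrix (Fin N) (Fin N) ℝ) (_ : G ∈ 𝓖), {x | 0 ≤ qf G x} := by
      ext x; simp [hGood, mem_iInter]
    rw [this]
    exact isClosed_biInter fun G _ => isClosed_le continuous_const (qf_cont G)
  have hK0cpt : IsCompact K0 := by
    apply IsCompact.image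
    · exact (isCompact_sphere 0 1).of_isClosed_subset
        (hGoodClosed.inter Metric.isClosed_sphere) inter_subset_right
    · exact continuous_pi fun i => continuous_pi fun j =>
        (continuous_apply i).mul (continuous_apply j)
  have hCHcpt : IsCompact CH := isCompact_convexHull' hK0cpt
  have htrK0 : ∀ M ∈ K0, 1 ≤ M.trace := by
    rintro M ⟨w, ⟨hwGood, hwS⟩, rfl⟩
    have hnorm : ‖w‖ = 1 := by simpa using hwS
    -- some coordinate has |w i| = 1
    have : ∃ i, |w i| = 1 := by
      obtain ⟨i, _, hi⟩ := Finset.exists_mem_eq_sup (Finset.univ : Finset (Fin N))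
        Finset.univ_nonempty (fun i => ‖w i‖₊)
      refine ⟨i, ?_⟩
      have : ‖w‖₊ = ‖w i‖₊ := by
        rw [Pi.nnnorm_def]; exact hi
      have h2 : ‖w i‖ = 1 := by
        have := congrArg (fun x : NNReal => (x : ℝ)) this
        simp only [coe_nnnorm] at this
        rw [← this, hnorm]
      simpa [Real.norm_eq_abs] using h2
    obtain ⟨i, hi⟩ := this
    have : (vecMulVec w w).trace = ∑ k, (w k)^2 := by
      unfold Matrix.trace Matrix.diag
      apply Finset.sum_congr rfl
      intro k _
      simp [Matrix.vecMulVec_apply]; ring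
    rw [this]
    have h1 : (w i)^2 = 1 := by
      have := congrArg (fun x => x^2) hi
      simpa [sq_abs] using this
    calc (1:ℝ) = (w i)^2 := h1.symm
      _ ≤ ∑ k, (w k)^2 :=
          Finset.single_le_sum (f := fun k => (w k)^2) (fun k _ => sq_nonneg _)
            (Finset.mem_univ i)
  have htrCH : ∀ M ∈ CH, 1 ≤ M.trace := by
    intro M hM
    have hconv : Convex ℝ {M : Matrix (Fin N) (Fin N) ℝ | 1 ≤ M.trace} := by
      refine convex_halfSpace_ge ⟨?_, ?_⟩ 1
      · exact fun a b => Matrix.trace_add a b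
      · intro r a; simp
    exact convexHull_min htrK0 hconv hM
  -- 𝒦 is a closed convex cone
  have h0mem : (0 : Matrix (Fin N) (Fin N) ℝ) ∈ 𝒦 := Or.inr rfl
  have hconvex : Convex ℝ 𝒦 := by
    rintro x hx y hy α β hα hβ hαβ
    rcases hx with ⟨t₁, C₁, hC₁, ht₁, rfl⟩ | hx0
    · rcases hy with ⟨t₂, C₂, hC₂, ht₂, rfl⟩ | hy0
      · by_cases hs : α * t₁ + β * t₂ = 0
        · have h1 : α * t₁ = 0 ∧ β * t₂ = 0 := by
            constructor <;> nlinarith [mul_nonneg hα ht₁, mul_nonneg hβ ht₂]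
          left
          refine ⟨0, C₁, hC₁, le_refl 0, ?_⟩
          rw [smul_smul, smul_smul, h1.1, h1.2]
          simp
        · have hspos : 0 < α * t₁ + β * t₂ := by
            rcases lt_or_eq_of_le (add_nonneg (mul_nonneg hα ht₁) (mul_nonneg hβ ht₂)) with h|h
            · exact h
            · exact absurd h.symm hs
          left
          refine ⟨α * t₁ + β * t₂,
            ((α * t₁)/(α * t₁ + β * t₂)) • C₁ + ((β * t₂)/(α * t₁ + β * t₂)) • C₂, ?_, hspos.le, ?_⟩
          · apply (convex_convexHull ℝ K0) hC₁ hC₂ (by positivity) (by positivity)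
            field_simp
          · rw [smul_add, smul_smul, smul_smul, smul_smul, smul_smul]
            rw [mul_div_cancel₀ _ hs, mul_div_cancel₀ _ hs]
      · left
        have hy0' : y = 0 := hy0
        subst hy0'
        refine ⟨α * t₁, C₁, hC₁, mul_nonneg hα ht₁, ?_⟩
        rw [smul_zero, add_zero, smul_smul]
    · have hx0' : x = 0 := hx0
      subst hx0'
      rcases hy with ⟨t₂, C₂, hC₂, ht₂, rfl⟩ | hy0
      · left
        refine ⟨β * t₂, C₂, hC₂, mul_nonneg hβ ht₂, ?_⟩
        rw [smul_zero, zero_add, smul_smul]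
      · have hy0' : y = 0 := hy0
        subst hy0'
        right
        simp
  -- closedness of 𝒦
  have hclosed : IsClosed 𝒦 := by
    rcases K0.eq_empty_or_nonempty with hK0e | hK0ne
    · have : 𝒦 = {0} := by
        rw [h𝒦, hCH, hK0e]
        simp [convexHull_empty]
      rw [this]
      exact isClosed_singleton
    · have hCHne : CH.Nonempty := hK0ne.mono (subset_convexHull ℝ K0)
      rw [← closure_subset_iff_isClosed]
      intro Y hY
      set R : ℝ := Y.trace + 1 with hR
      set Uo : Set (Matrix (Fin N) (Fin N) ℝ) := {M | M.trace < R} with hUo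
      have hUoOpen : IsOpen Uo := isOpen_lt trace_continuous continuous_const
      have hYUo : Y ∈ Uo := by simp [hUo, hR]
      have hYc : Y ∈ closure (𝒦 ∩ Uo) := by
        rw [mem_closure_iff] at hY ⊢
        intro o ho hYo
        obtain ⟨z, hz⟩ := hY (o ∩ Uo) (ho.inter hUoOpen) ⟨hYo, hYUo⟩
        exact ⟨z, ⟨hz.1.1, hz.2, hz.1.2⟩⟩
      set Kc : Set (Matrix (Fin N) (Fin N) ℝ) :=
        (fun p : ℝ × Matrix (Fin N) (Fin N) ℝ => p.1 • p.2) '' ((Icc (0:ℝ) R) ×ˢ CH) ∪ {0}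
        with hKc
      have hKcClosed : IsClosed Kc := by
        apply IsClosed.union
        · apply IsCompact.isClosed
          apply IsCompact.image
          · exact isCompact_Icc.prod hCHcpt
          · exact continuous_fst.smul continuous_snd
        · exact isClosed_singleton
      have hsub : 𝒦 ∩ Uo ⊆ Kc := by
        rintro M ⟨hM, hMUo⟩
        rcases hM with ⟨t, C, hC, ht, rfl⟩ | hM0
        · left
          refine ⟨(t, C), ⟨⟨ht, ?_⟩, hC⟩, rfl⟩
          have h1 : 1 ≤ C.trace := htrCH C hC
          have h2 : (t • C).trace = t * C.trace := by simp
          have h3 : t * C.trace < R := by rw [← h2]; exact hMUo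
          nlinarith
        · right; exact hM0
      have : Y ∈ Kc := by
        have := closure_mono hsub hYc
        rwa [hKcClosed.closure_eq] at this
      rcases this with ⟨⟨t, C⟩, ⟨⟨ht0, _⟩, hC⟩, rfl⟩ | h0
      · exact Or.inl ⟨t, C, hC, ht0, rfl⟩
      · exact Or.inr h0
  -- separation: the identity must belong to 𝒦
  have hid : (1 : Matrix (Fin N) (Fin N) ℝ) ∈ 𝒦 := by
    by_contra hmem
    haveI : LocallyConvexSpace ℝ (Matrix (Fin N) (Fin N) ℝ) :=
      (norm_withSeminorms ℝ _).toLocallyConvexSpace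
    obtain ⟨f, u, hfa, hfx⟩ := geometric_hahn_banach_closed_point hconvex hclosed hmem
    have hu0 : 0 < u := by
      have := hfa 0 h0mem
      simpa using this
    have hgoodf : ∀ w : Fin N → ℝ, (∀ G ∈ 𝓖, 0 ≤ qf G w) → f (vecMulVec w w) ≤ 0 := by
      intro w hw
      by_cases hw0 : w = 0
      · subst hw0
        rw [vecMulVec_zero_zero]
        simp
      · have hnw : 0 < ‖w‖ := norm_pos_iff.2 hw0
        set w' : Fin N → ℝ := ‖w‖⁻¹ • w with hw'
        have hw'S : w' ∈ Metric.sphere (0 : Fin N → ℝ) 1 := by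
          simp only [mem_sphere_iff_norm, sub_zero, hw', norm_smul, norm_inv, norm_norm]
          field_simp
        have hw'Good : w' ∈ Good := by
          intro G hG
          rw [hw', qf_smul]
          exact mul_nonneg (by positivity) (hw G hG)
        have hVmem : vecMulVec w' w' ∈ CH :=
          subset_convexHull ℝ K0 ⟨w', ⟨hw'Good, hw'S⟩, rfl⟩
        have hfle : f (vecMulVec w' w') ≤ 0 := by
          by_contra hfp
          push_neg at hfp
          have hmem2 : ((u + 1) / f (vecMulVec w' w')) • vecMulVec w' w' ∈ 𝒦 := by
            left
            exact ⟨(u + 1) / f (vecMulVec w' w'), vecMulVec w' w', hVmem,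
              by positivity, rfl⟩
          have := hfa _ hmem2
          rw [_root_.map_smul, smul_eq_mul, div_mul_cancel₀ _ (ne_of_gt hfp)] at this
          linarith
        have hrw : vecMulVec w w = (‖w‖^2) • vecMulVec w' w' := by
          rw [hw', vecMulVec_smul_self, smul_smul]
          have : ‖w‖^2 * (‖w‖⁻¹)^2 = 1 := by field_simp
          rw [this, one_smul]
        rw [hrw, _root_.map_smul, smul_eq_mul]
        exact mul_nonpos_of_nonneg_of_nonpos (by positivity) hfle
    exact no_separation 𝓖 hsymm htr hexcl f hgoodf (by linarith [hfx, hu0])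
  -- extract the decomposition
  rcases hid with ⟨t, C, hC, ht0, hid⟩ | h10
  · rw [hCH, convexHull_eq] at hC
    obtain ⟨ι, tt, wgt, z, hwgt0, hwgt1, hzK, hcm⟩ := hC
    -- z i ∈ K0 : get vectors
    have hz : ∀ i ∈ tt, ∃ v : Fin N → ℝ, (∀ G ∈ 𝓖, 0 ≤ qf G v) ∧ z i = vecMulVec v v := by
      intro i hi
      obtain ⟨v, ⟨hvG, _⟩, hv⟩ := hzK i hi
      exact ⟨v, hvG, hv.symm⟩
    choose v hvgood hvz using hz
    classical
    refine ⟨ι, tt, fun i => if h : i ∈ tt then t * wgt i else 0,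
      fun i => if h : i ∈ tt then v i h else 0, ?_, ?_, ?_⟩
    · intro i hi
      simp only [dif_pos hi]
      exact mul_nonneg ht0 (hwgt0 i hi)
    · intro i hi G hG
      simp only [dif_pos hi]
      exact hvgood i hi G hG
    · rw [hid]
      rw [Finset.centerMass_eq_of_sum_1 _ _ hwgt1] at hcm
      rw [← hcm, Finset.smul_sum]
      apply Finset.sum_congr rfl
      intro i hi
      simp only [dif_pos hi]
      rw [hvz i hi, smul_smul]
  · exfalso
    have h1 : (1 : Matrix (Fin N) (Fin N) ℝ) ≠ 0 := by
      intro h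
      have := congrFun (congrFun h ⟨0, hN⟩) ⟨0, hN⟩
      simp at this
    exact h1 h10

private lemma posSemidef_vecMulVec (x : Fin N → ℝ) : (vecMulVec x x).PosSemidef := by
  refine Matrix.PosSemidef.of_dotProduct_mulVec_nonneg ?_ ?_
  · show (vecMulVec x x)ᴴ = vecMulVec x x
    ext i j
    simp [Matrix.conjTranspose_apply, Matrix.vecMulVec_apply, mul_comm]
  · intro y
    have h1 : (vecMulVec x x) *ᵥ y = (x ⬝ᵥ y) • x := by
      funext k
      simp only [Matrix.mulVec, Matrix.vecMulVec_apply, dotProduct, Pi.smul_apply,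
        smul_eq_mul, Finset.sum_mul, Finset.mul_sum]
      exact Finset.sum_congr rfl fun j _ => by ring
    rw [h1]
    have : star y = y := by funext k; simp
    rw [this]
    have h2 : y ⬝ᵥ ((x ⬝ᵥ y) • x) = (x ⬝ᵥ y) * (y ⬝ᵥ x) := by
      simp [dotProduct_smul, mul_comm]
    rw [h2, dotProduct_comm]
    exact mul_self_nonneg _

private lemma sum_form_vecMulVec (B : Matrix (Fin N) (Fin N) ℝ) (y : Fin N → ℝ) :
    (∑ i, ∑ j, B i j * (vecMulVec y y) i j) = qf B y := by
  have hq : qf B y = ∑ i, y i * ∑ j, B i j * y j := rfl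
  rw [hq]
  apply Finset.sum_congr rfl
  intro i _
  rw [Finset.mul_sum]
  apply Finset.sum_congr rfl
  intro j _
  rw [Matrix.vecMulVec_apply]
  ring

private lemma sum_form_smul (B : Matrix (Fin N) (Fin N) ℝ) (r : ℝ)
    (M : Matrix (Fin N) (Fin N) ℝ) :
    (∑ i, ∑ j, B i j * (r • M) i j) = r * ∑ i, ∑ j, B i j * M i j := by
  rw [Finset.mul_sum]
  apply Finset.sum_congr rfl
  intro i _
  rw [Finset.mul_sum]
  apply Finset.sum_congr rfl
  intro j _
  simp [Matrix.smul_apply]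
  ring

private lemma sum_form_add (B M M' : Matrix (Fin N) (Fin N) ℝ) :
    (∑ i, ∑ j, B i j * (M + M') i j)
      = (∑ i, ∑ j, B i j * M i j) + (∑ i, ∑ j, B i j * M' i j) := by
  rw [← Finset.sum_add_distrib]
  apply Finset.sum_congr rfl
  intro i _
  rw [← Finset.sum_add_distrib]
  apply Finset.sum_congr rfl
  intro j _
  rw [Matrix.add_apply]
  ring

private lemma trace_form_eq {B X : Matrix (Fin N) (Fin N) ℝ} (hB : B.IsSymm) :
    (X * B).trace = ∑ i, ∑ j, B i j * X i j := by
  unfold Matrix.trace Matrix.diag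
  apply Finset.sum_congr rfl
  intro i _
  rw [Matrix.mul_apply]
  apply Finset.sum_congr rfl
  intro j _
  have : B j i = B i j := by
    conv_lhs => rw [← hB]
    rfl
  rw [this]; ring

private lemma conj_vecMulVec {S : Matrix (Fin N) (Fin N) ℝ} (hS : Sᵀ = S)
    (a : Fin N → ℝ) :
    S * vecMulVec a a * S = vecMulVec (S *ᵥ a) (S *ᵥ a) := by
  ext k l
  simp only [Matrix.mul_apply, Matrix.vecMulVec_apply, Matrix.mulVec, dotProduct]
  rw [Finset.sum_mul_sum]
  rw [Finset.sum_comm]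
  apply Finset.sum_congr rfl
  intro j _
  rw [Finset.sum_mul]
  apply Finset.sum_congr rfl
  intro i _
  have hjl : S j l = S l j := congrFun (congrFun hS l) j
  rw [hjl]
  ring

private lemma qf_conj {S : Matrix (Fin N) (Fin N) ℝ} (hS : Sᵀ = S)
    (B : Matrix (Fin N) (Fin N) ℝ) (x : Fin N → ℝ) :
    qf (S * B * S) x = qf B (S *ᵥ x) := by
  unfold qf
  rw [← Matrix.mulVec_mulVec, ← Matrix.mulVec_mulVec]
  rw [dotProduct_mulVec x S]
  congr 1
  nth_rewrite 1 [← hS]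
  rw [Matrix.vecMul_transpose]

/-- Conditions (B)' and (C)' together imply that `J₊(𝓑)` is rank-one
generated. Here `n = m + 1 ≥ 2`, and for `u ∈ ℝ^m`, `[u;1]` is `Fin.snoc u 1`. -/
theorem ROG_of_conditionB'_and_C' (m : ℕ) (hm : 1 ≤ m)
    (𝓑 : Set (Matrix (Fin (m + 1)) (Fin (m + 1)) ℝ)) (h𝓑 : ∀ B ∈ 𝓑, B.IsSymm)
    (hB' : ∀ A ∈ 𝓑, ∀ B ∈ 𝓑, A ≠ B → ∀ u : Fin m → ℝ,
      ¬((Fin.snoc u 1) ⬝ᵥ A.mulVec (Fin.snoc u 1) < 0 ∧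
        (Fin.snoc u 1) ⬝ᵥ B.mulVec (Fin.snoc u 1) ≤ 0))
    (hC' : ∀ B ∈ 𝓑, ∃ u : Fin m → ℝ, (Fin.snoc u 1) ⬝ᵥ B.mulVec (Fin.snoc u 1) < 0) :
    {X : Matrix (Fin (m + 1)) (Fin (m + 1)) ℝ |
        X.PosSemidef ∧ ∀ B ∈ 𝓑, 0 ≤ ∑ i, ∑ j, B i j * X i j}
      = convexHull ℝ
        ({X : Matrix (Fin (m + 1)) (Fin (m + 1)) ℝ |
            X.PosSemidef ∧ ∀ B ∈ 𝓑, 0 ≤ ∑ i, ∑ j, B i j * X i j}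
          ∩ {X : Matrix (Fin (m + 1)) (Fin (m + 1)) ℝ |
            ∃ x : Fin (m + 1) → ℝ, X = vecMulVec x x}) := by
  classical
  apply Set.Subset.antisymm
  · -- hard direction
    intro X hX
    obtain ⟨hXP, hXC⟩ := hX
    set S : Matrix (Fin (m+1)) (Fin (m+1)) ℝ := CFC.sqrt X with hSdef
    have hSP : S.PosSemidef := (CFC.sqrt_nonneg X).posSemidef
    have hSsymm : Sᵀ = S := by
      have := hSP.1
      rwa [Matrix.IsHermitian, Matrix.conjTranspose_eq_transpose_of_trivial] at this
    have hSS : S * S = X := CFC.sqrt_mul_sqrt_self X hXP.nonneg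
    set 𝓖 : Set (Matrix (Fin (m+1)) (Fin (m+1)) ℝ) := (fun B => S * B * S) '' 𝓑 with h𝓖
    have hsymm𝓖 : ∀ G ∈ 𝓖, G.IsSymm := by
      rintro _ ⟨B, hB, rfl⟩
      show (S * B * S)ᵀ = S * B * S
      rw [Matrix.transpose_mul, Matrix.transpose_mul, hSsymm, h𝓑 B hB, ← Matrix.mul_assoc]
    have htr𝓖 : ∀ G ∈ 𝓖, 0 ≤ G.trace := by
      rintro _ ⟨B, hB, rfl⟩
      rw [Matrix.trace_mul_cycle, hSS, trace_form_eq (h𝓑 B hB)]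
      exact hXC B hB
    have hexcl𝓖 : ∀ F ∈ 𝓖, ∀ G ∈ 𝓖, F ≠ G → ∀ x, qf F x < 0 → 0 ≤ qf G x := by
      rintro _ ⟨A, hA, rfl⟩ _ ⟨B, hB, rfl⟩ hne x hx
      have hABne : A ≠ B := fun h => hne (by rw [h])
      rw [qf_conj hSsymm]
      rw [qf_conj hSsymm] at hx
      exact exclusivity 𝓑 hB' hC' hA hB hABne _ hx
    obtain ⟨ι, tt, c, w, hc0, hgood, hsum⟩ :=
      sphere_lemma (Nat.succ_pos m) 𝓖 hsymm𝓖 htr𝓖 hexcl𝓖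
    have hXdecomp : X = ∑ i ∈ tt, c i • vecMulVec (S *ᵥ w i) (S *ᵥ w i) := by
      calc X = S * 1 * S := by rw [Matrix.mul_one, hSS]
        _ = S * (∑ i ∈ tt, c i • vecMulVec (w i) (w i)) * S := by rw [hsum]
        _ = ∑ i ∈ tt, c i • vecMulVec (S *ᵥ w i) (S *ᵥ w i) := by
            rw [Matrix.mul_sum, Matrix.sum_mul]
            apply Finset.sum_congr rfl
            intro i _
            rw [Matrix.mul_smul, Matrix.smul_mul, conj_vecMulVec hSsymm]
    set T : ℝ := ∑ i ∈ tt, c i with hTdef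
    by_cases hT : T = 0
    · exfalso
      have hzero : ∀ i ∈ tt, c i = 0 :=
        (Finset.sum_eq_zero_iff_of_nonneg hc0).mp hT
      have h10 : (1 : Matrix (Fin (m+1)) (Fin (m+1)) ℝ) = 0 := by
        rw [← hsum]
        apply Finset.sum_eq_zero
        intro i hi
        rw [hzero i hi, zero_smul]
      have := congrFun (congrFun h10 0) 0
      simp at this
    · have hTpos : 0 < T := lt_of_le_of_ne (Finset.sum_nonneg hc0) (Ne.symm hT)
      set z : ι → Matrix (Fin (m+1)) (Fin (m+1)) ℝ :=
        fun i => T • vecMulVec (S *ᵥ w i) (S *ᵥ w i) with hzdef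
      have hzmem : ∀ i ∈ tt, z i ∈
          ({X : Matrix (Fin (m + 1)) (Fin (m + 1)) ℝ |
            X.PosSemidef ∧ ∀ B ∈ 𝓑, 0 ≤ ∑ i, ∑ j, B i j * X i j}
          ∩ {X : Matrix (Fin (m + 1)) (Fin (m + 1)) ℝ |
            ∃ x : Fin (m + 1) → ℝ, X = vecMulVec x x}) := by
        intro i hi
        have hzi : z i = vecMulVec (Real.sqrt T • (S *ᵥ w i)) (Real.sqrt T • (S *ᵥ w i)) := by
          rw [hzdef]
          rw [vecMulVec_smul_self, Real.sq_sqrt hTpos.le]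
        refine ⟨⟨?_, ?_⟩, ?_⟩
        · rw [hzi]; exact posSemidef_vecMulVec _
        · intro B hB
          show 0 ≤ ∑ a, ∑ b, B a b * (z i) a b
          rw [hzdef]
          rw [sum_form_smul, sum_form_vecMulVec]
          apply mul_nonneg hTpos.le
          rw [← qf_conj hSsymm]
          exact hgood i hi (S * B * S) ⟨B, hB, rfl⟩
        · exact ⟨_, hzi⟩
      have hsum1' : ∑ i ∈ tt, c i / T = 1 := by
        rw [← Finset.sum_div, ← hTdef]
        field_simp
      have hmem := Finset.centerMass_mem_convexHull tt
        (fun i hi => div_nonneg (hc0 i hi) hTpos.le)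
        (by rw [hsum1']; norm_num) hzmem
      rw [Finset.centerMass_eq_of_sum_1 _ _ hsum1'] at hmem
      have hfinal : (∑ i ∈ tt, (c i / T) • z i) = X := by
        rw [hXdecomp]
        apply Finset.sum_congr rfl
        intro i hi
        rw [hzdef, smul_smul, div_mul_cancel₀ _ hT]
      rwa [hfinal] at hmem
  · -- easy direction
    apply convexHull_min Set.inter_subset_left
    intro X hX Y hY a b ha hb hab
    refine ⟨Matrix.PosSemidef.of_dotProduct_mulVec_nonneg ?_ ?_, ?_⟩
    · show (a • X + b • Y)ᴴ = a • X + b • Y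
      rw [Matrix.conjTranspose_add, Matrix.conjTranspose_smul, Matrix.conjTranspose_smul,
        hX.1.1, hY.1.1]
      congr 1 <;> simp
    · intro x
      have h1 := hX.1.dotProduct_mulVec_nonneg x
      have h2 := hY.1.dotProduct_mulVec_nonneg x
      have hsx : star x = x := by funext k; simp
      rw [hsx] at h1 h2 ⊢
      rw [Matrix.add_mulVec, Matrix.smul_mulVec, Matrix.smul_mulVec,
        dotProduct_add, dotProduct_smul, dotProduct_smul]
      have := add_nonneg (mul_nonneg ha h1) (mul_nonneg hb h2)
      simpa using this
    · intro B hB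
      have h1 := hX.2 B hB
      have h2 := hY.2 B hB
      show 0 ≤ ∑ i, ∑ j, B i j * (a • X + b • Y) i j
      rw [sum_form_add, sum_form_smul, sum_form_smul]
      exact add_nonneg (mul_nonneg ha h1) (mul_nonneg hb h2)
end

section
/- Let n ≥ 2 and let 𝓑 ⊆ S^n satisfy Condition (B)' alone: for every pair of distinct A, B ∈ 𝓑, A_< ∩ B_≤ = ∅. Then J_+(𝓑) is rank-one generated: J_+(𝓑) = convexHull(J_+(𝓑) ∩ Γ^n). -/
open Matrix

namespace ROGaux

noncomputable section
open Classical

variable {n : ℕ}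

abbrev V (n : ℕ) := Fin n → ℝ
abbrev EE (n : ℕ) := (Fin n × Fin n) → ℝ

def rho (v : V n) : EE n := fun p => v p.1 * v p.2

def Q (c : EE n) (v : V n) : ℝ := ∑ p : Fin n × Fin n, c p * (v p.1 * v p.2)

def CR (c : EE n) (u w : V n) : ℝ :=
  ∑ p : Fin n × Fin n, c p * (u p.1 * w p.2 + w p.1 * u p.2)

lemma Q_eq (c : EE n) (v : V n) : Q c v = ∑ p : Fin n × Fin n, c p * rho v p := rfl

lemma Q_expand (c : EE n) (u w : V n) (α : ℝ) :
    Q c (u + α • w) = Q c u + α * CR c u w + α ^ 2 * Q c w := by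
  unfold Q CR
  rw [Finset.mul_sum, Finset.mul_sum, ← Finset.sum_add_distrib, ← Finset.sum_add_distrib]
  refine Finset.sum_congr rfl fun p _ => ?_
  simp only [Pi.add_apply, Pi.smul_apply, smul_eq_mul]
  ring

lemma Q_smul (c : EE n) (a : ℝ) (v : V n) : Q c (a • v) = a ^ 2 * Q c v := by
  unfold Q
  rw [Finset.mul_sum]
  refine Finset.sum_congr rfl fun p _ => ?_
  simp only [Pi.smul_apply, smul_eq_mul]
  ring

lemma rho_smul (a : ℝ) (v : V n) : rho (a • v) = (a ^ 2) • rho v := by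
  funext p
  simp only [rho, Pi.smul_apply, smul_eq_mul]
  ring

lemma CR_smul_left (c : EE n) (a : ℝ) (u w : V n) : CR c (a • u) w = a * CR c u w := by
  unfold CR
  rw [Finset.mul_sum]
  refine Finset.sum_congr rfl fun p _ => ?_
  simp only [Pi.smul_apply, smul_eq_mul]
  ring

lemma CR_smul_right (c : EE n) (a : ℝ) (u w : V n) : CR c u (a • w) = a * CR c u w := by
  unfold CR
  rw [Finset.mul_sum]
  refine Finset.sum_congr rfl fun p _ => ?_
  simp only [Pi.smul_apply, smul_eq_mul]
  ring

lemma rho_rot (u w : V n) (α : ℝ) :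
    rho ((Real.sqrt (1 + α ^ 2))⁻¹ • (u + α • w)) +
      rho ((Real.sqrt (1 + α ^ 2))⁻¹ • (α • u - w)) = rho u + rho w := by
  have hd : (0:ℝ) < 1 + α ^ 2 := by positivity
  have hs : Real.sqrt (1 + α ^ 2) * Real.sqrt (1 + α ^ 2) = 1 + α ^ 2 :=
    Real.mul_self_sqrt hd.le
  have hs0 : Real.sqrt (1 + α ^ 2) ≠ 0 := by positivity
  funext p
  simp only [rho, Pi.add_apply, Pi.smul_apply, Pi.sub_apply, smul_eq_mul]
  field_simp
  rw [Real.sq_sqrt hd.le]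
  ring

lemma Q_sum_pair_of_rho (c : EE n) {x y u w : V n}
    (h : rho x + rho y = rho u + rho w) : Q c x + Q c y = Q c u + Q c w := by
  have h1 : ∀ p : Fin n × Fin n, rho x p + rho y p = rho u p + rho w p := by
    intro p; exact congrFun h p
  simp only [Q_eq]
  rw [← Finset.sum_add_distrib, ← Finset.sum_add_distrib]
  refine Finset.sum_congr rfl fun p _ => ?_
  have := h1 p
  linear_combination c p * this

lemma msum_apply (s : Multiset (EE n)) (p : Fin n × Fin n) :
    s.sum p = (s.map (fun e => e p)).sum := by
  induction s using Multiset.induction_on with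
  | empty => simp
  | cons a s ih => simp [ih]

lemma map_Q_sum (c : EE n) (s : Multiset (V n)) :
    (s.map (Q c)).sum = ∑ p : Fin n × Fin n, c p * ((s.map rho).sum p) := by
  induction s using Multiset.induction_on with
  | empty => simp
  | cons a s ih =>
    rw [Multiset.map_cons, Multiset.sum_cons, ih, Multiset.map_cons, Multiset.sum_cons, Q_eq,
      ← Finset.sum_add_distrib]
    exact Finset.sum_congr rfl fun p _ => by simp [Pi.add_apply, mul_add]

lemma exists_pos_of_sum_pos (f : V n → ℝ) (s : Multiset (V n))
    (h : 0 < (s.map f).sum) : ∃ v ∈ s, 0 < f v := by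
  induction s using Multiset.induction_on with
  | empty => simp at h
  | cons a s ih =>
    simp only [Multiset.map_cons, Multiset.sum_cons] at h
    by_cases ha : 0 < f a
    · exact ⟨a, Multiset.mem_cons_self a s, ha⟩
    · have : 0 < (s.map f).sum := by nlinarith [not_lt.mp ha]
      obtain ⟨v, hv, hfv⟩ := ih this
      exact ⟨v, Multiset.mem_cons_of_mem hv, hfv⟩


/-- Sturm–Zhang style rank-one decomposition fixing a single quadratic form. -/
lemma SZ (c : EE n) : ∀ (M : ℕ) (s : Multiset (V n)),
    Multiset.countP (fun v => ¬ Q c v = 0) s ≤ M →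
    0 ≤ (s.map (Q c)).sum →
    ∃ s' : Multiset (V n), (s'.map rho).sum = (s.map rho).sum ∧ ∀ v ∈ s', 0 ≤ Q c v := by
  intro M
  induction M with
  | zero =>
    intro s hc _
    refine ⟨s, rfl, fun v hv => ?_⟩
    have h0 : Multiset.countP (fun v => ¬ Q c v = 0) s = 0 := Nat.le_zero.mp hc
    by_contra hneg
    have : 0 < Multiset.countP (fun v => ¬ Q c v = 0) s := by
      rw [Multiset.countP_pos]
      exact ⟨v, hv, fun h => hneg (le_of_eq h.symm)⟩
    omega
  | succ M ih =>
    intro s hc hsum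
    by_cases hall : ∀ v ∈ s, 0 ≤ Q c v
    · exact ⟨s, rfl, hall⟩
    push_neg at hall
    obtain ⟨u, hu, hqu⟩ := hall
    set t : Multiset (V n) := s.erase u with ht
    have hst : u ::ₘ t = s := Multiset.cons_erase hu
    have hsum_t : (s.map (Q c)).sum = Q c u + (t.map (Q c)).sum := by
      rw [← hst]; simp
    have htpos : 0 < (t.map (Q c)).sum := by
      have := hsum; rw [hsum_t] at this; linarith
    obtain ⟨v, hv, hqv⟩ := exists_pos_of_sum_pos (Q c) t htpos
    set t₂ : Multiset (V n) := t.erase v with ht₂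
    have htt : v ::ₘ t₂ = t := Multiset.cons_erase hv
    -- quadratic root
    set a := Q c u with ha
    set b := Q c v with hb
    set β := CR c u v with hβ
    have hb0 : b ≠ 0 := ne_of_gt hqv
    have hdisc : (0:ℝ) ≤ β ^ 2 - 4 * a * b := by nlinarith
    set α := (-β + Real.sqrt (β ^ 2 - 4 * a * b)) / (2 * b) with hα
    have hss : Real.sqrt (β ^ 2 - 4 * a * b) ^ 2 = β ^ 2 - 4 * a * b := Real.sq_sqrt hdisc
    have hroot : a + α * β + α ^ 2 * b = 0 := by
      rw [hα]
      field_simp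
      ring_nf at hss ⊢
      nlinarith [hss]
    set d := Real.sqrt (1 + α ^ 2) with hd
    set x := d⁻¹ • (u + α • v) with hx
    set y := d⁻¹ • (α • u - v) with hy
    have hrot : rho x + rho y = rho u + rho v := rho_rot u v α
    have hQx : Q c x = 0 := by
      rw [hx, Q_smul, Q_expand]
      rw [← ha, ← hβ, ← hb, hroot, mul_zero]
    have hQxy : Q c x + Q c y = a + b := Q_sum_pair_of_rho c hrot
    set s₂ : Multiset (V n) := x ::ₘ y ::ₘ t₂ with hs₂
    have hcount : Multiset.countP (fun v => ¬ Q c v = 0) s₂ ≤ M := by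
      have h1 : Multiset.countP (fun w => ¬ Q c w = 0) s
          = Multiset.countP (fun w => ¬ Q c w = 0) t₂ + 2 := by
        rw [← hst, ← htt]
        rw [Multiset.countP_cons, Multiset.countP_cons]
        have h2 : ¬ Q c u = 0 := by rw [← ha]; exact ne_of_lt hqu
        have h3 : ¬ Q c v = 0 := by rw [← hb]; exact ne_of_gt hqv
        simp [h2, h3]
      have h4 : Multiset.countP (fun w => ¬ Q c w = 0) s₂
          ≤ Multiset.countP (fun w => ¬ Q c w = 0) t₂ + 1 := by
        rw [hs₂, Multiset.countP_cons, Multiset.countP_cons]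
        have h5 : (if ¬ Q c x = 0 then 1 else 0) = 0 := by simp [hQx]
        rw [h5]
        split_ifs <;> omega
      omega
    have hsum₂ : 0 ≤ (s₂.map (Q c)).sum := by
      have e1 : (s₂.map (Q c)).sum = Q c x + Q c y + (t₂.map (Q c)).sum := by
        rw [hs₂]; simp; ring
      have e2 : (s.map (Q c)).sum = a + b + (t₂.map (Q c)).sum := by
        rw [← hst, ← htt]; simp [ha, hb]; ring
      rw [e1, hQxy]
      rw [e2] at hsum
      linarith
    obtain ⟨s', hs'_sum, hs'_good⟩ := ih s₂ hcount hsum₂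
    refine ⟨s', ?_, hs'_good⟩
    rw [hs'_sum]
    have : (s₂.map rho).sum = (s.map rho).sum := by
      rw [hs₂, ← hst, ← htt]
      simp only [Multiset.map_cons, Multiset.sum_cons]
      rw [← add_assoc, ← add_assoc, hrot]
    rw [this]

def emat {n : ℕ} (B : Matrix (Fin n) (Fin n) ℝ) : EE n := fun p => B p.1 p.2

lemma Q_emat (B : Matrix (Fin n) (Fin n) ℝ) (v : V n) :
    Q (emat B) v = v ⬝ᵥ B.mulVec v := by
  unfold Q emat dotProduct Matrix.mulVec
  rw [Fintype.sum_prod_type]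
  refine Finset.sum_congr rfl fun i _ => ?_
  simp only [dotProduct, Finset.mul_sum]
  refine Finset.sum_congr rfl fun j _ => ?_
  ring

lemma Q_emat_sum (B X : Matrix (Fin n) (Fin n) ℝ) :
    ∑ p : Fin n × Fin n, emat B p * (fun p : Fin n × Fin n => X p.1 p.2) p
      = ∑ i, ∑ j, B i j * X i j := by
  rw [Fintype.sum_prod_type]; rfl

lemma neg_quad {a : ℝ} (ha : a < 0) (b d : ℝ) :
    ∃ t₀ : ℝ, ∀ t, t₀ ≤ t → d + t * b + t ^ 2 * a < 0 := by
  refine ⟨max 1 ((|b| + |d| + 1) / (-a)), fun t ht => ?_⟩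
  have h1 : (1:ℝ) ≤ t := le_trans (le_max_left _ _) ht
  have h2 : (|b| + |d| + 1) / (-a) ≤ t := le_trans (le_max_right _ _) ht
  have h3 : |b| + |d| + 1 ≤ t * (-a) := (div_le_iff₀ (by linarith)).mp h2
  nlinarith [mul_le_mul_of_nonneg_left h3 (by linarith : (0:ℝ) ≤ t),
    mul_le_mul_of_nonneg_left (le_abs_self b) (by linarith : (0:ℝ) ≤ t),
    le_abs_self d, abs_nonneg d, abs_nonneg b,
    mul_nonneg (by linarith : (0:ℝ) ≤ t - 1) (abs_nonneg d)]

lemma F1 (m : ℕ) (𝓑 : Set (Matrix (Fin (m + 1)) (Fin (m + 1)) ℝ))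
    (hB' : ∀ A ∈ 𝓑, ∀ B ∈ 𝓑, A ≠ B → ∀ u : Fin m → ℝ,
      ¬((Fin.snoc u 1) ⬝ᵥ A.mulVec (Fin.snoc u 1) < 0 ∧
        (Fin.snoc u 1) ⬝ᵥ B.mulVec (Fin.snoc u 1) ≤ 0)) :
    ∀ A ∈ 𝓑, ∀ B ∈ 𝓑, A ≠ B → ∀ x : V (m + 1),
      Q (emat A) x < 0 → 0 ≤ Q (emat B) x := by
  intro A hA B hB hAB x hx
  by_contra hBneg
  push_neg at hBneg
  set c := x (Fin.last m) with hcdef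
  by_cases hc : c = 0
  · -- last coordinate zero: push to infinity
    set δ : V (m + 1) := Pi.single (Fin.last m) 1 with hδ
    have hsnoc : ∀ t : ℝ, (Fin.snoc (fun i : Fin m => t * x i.castSucc) 1 : V (m + 1))
        = δ + t • x := by
      intro t
      funext i
      refine Fin.lastCases ?_ (fun j => ?_) i
      · simp [Fin.snoc_last, hδ, Pi.single_eq_same, ← hcdef, hc]
      · have hne : (Fin.castSucc j) ≠ Fin.last m := Fin.ne_of_lt (Fin.castSucc_lt_last j)
        simp [Fin.snoc_castSucc, hδ, Pi.single_eq_of_ne hne]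
    obtain ⟨t₀A, ht₀A⟩ := neg_quad hx (CR (emat A) δ x) (Q (emat A) δ)
    obtain ⟨t₀B, ht₀B⟩ := neg_quad hBneg (CR (emat B) δ x) (Q (emat B) δ)
    set t := max t₀A t₀B with htdef
    have hQA : Q (emat A) (δ + t • x) < 0 := by
      rw [Q_expand]; exact ht₀A t (le_max_left _ _)
    have hQB : Q (emat B) (δ + t • x) < 0 := by
      rw [Q_expand]; exact ht₀B t (le_max_right _ _)
    refine hB' A hA B hB hAB (fun i : Fin m => t * x i.castSucc) ⟨?_, ?_⟩
    · rw [← Q_emat, hsnoc t]; exact hQA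
    · rw [← Q_emat, hsnoc t]; exact le_of_lt hQB
  · -- last coordinate nonzero: rescale
    have hsnoc : (Fin.snoc (fun i : Fin m => c⁻¹ * x i.castSucc) 1 : V (m + 1))
        = c⁻¹ • x := by
      funext i
      refine Fin.lastCases ?_ (fun j => ?_) i
      · simp [Fin.snoc_last, ← hcdef, inv_mul_cancel₀ hc]
      · simp [Fin.snoc_castSucc]
    have hpos : (0:ℝ) < (c⁻¹) ^ 2 := by positivity
    refine hB' A hA B hB hAB (fun i : Fin m => c⁻¹ * x i.castSucc) ⟨?_, ?_⟩
    · rw [← Q_emat, hsnoc, Q_smul]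
      exact mul_neg_of_pos_of_neg hpos hx
    · rw [← Q_emat, hsnoc, Q_smul]
      exact le_of_lt (mul_neg_of_pos_of_neg hpos hBneg)

lemma Q_seg (c : EE n) (u w : V n) (t : ℝ) :
    Q c ((1 - t) • u + t • w)
      = (1 - t) ^ 2 * Q c u + t * (1 - t) * CR c u w + t ^ 2 * Q c w := by
  have h := Q_expand c ((1 - t) • u) w t
  rw [Q_smul, CR_smul_left] at h
  rw [h]; ring

lemma seg_neg {a b cr : ℝ} (ha : a < 0) (hb : b < 0) (hcr : cr ≤ 0)
    {t : ℝ} (ht0 : 0 ≤ t) (ht1 : t ≤ 1) :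
    (1 - t) ^ 2 * a + t * (1 - t) * cr + t ^ 2 * b < 0 := by
  have hcr' : t * (1 - t) * cr ≤ 0 :=
    mul_nonpos_of_nonneg_of_nonpos (mul_nonneg ht0 (by linarith)) hcr
  by_cases ht2 : t ≤ 1 / 2
  · have h14 : (0:ℝ) ≤ (1 - t) ^ 2 - 1/4 := by nlinarith
    have h1 : (1 - t) ^ 2 * a ≤ (1/4) * a := by
      nlinarith [mul_nonneg h14 (by linarith : (0:ℝ) ≤ -a)]
    have h2 : t ^ 2 * b ≤ 0 := mul_nonpos_of_nonneg_of_nonpos (sq_nonneg t) hb.le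
    linarith
  · have h14 : (0:ℝ) ≤ t ^ 2 - 1/4 := by nlinarith
    have h1 : t ^ 2 * b ≤ (1/4) * b := by
      nlinarith [mul_nonneg h14 (by linarith : (0:ℝ) ≤ -b)]
    have h2 : (1 - t) ^ 2 * a ≤ 0 :=
      mul_nonpos_of_nonneg_of_nonpos (sq_nonneg (1 - t)) ha.le
    linarith

/-- If some vector violates `A` strictly (and `W`), then every vector on which `W` is negative
also violates `A` strictly. -/
lemma unique_violator (m : ℕ) (𝓑 : Set (Matrix (Fin (m + 1)) (Fin (m + 1)) ℝ))
    (hF1 : ∀ A ∈ 𝓑, ∀ B ∈ 𝓑, A ≠ B → ∀ x : V (m + 1),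
      Q (emat A) x < 0 → 0 ≤ Q (emat B) x)
    (w : EE (m + 1))
    (hgoodw : ∀ z : V (m + 1), (∀ B ∈ 𝓑, 0 ≤ Q (emat B) z) → 0 ≤ Q w z)
    {A : Matrix (Fin (m + 1)) (Fin (m + 1)) ℝ} (hA : A ∈ 𝓑)
    {z₀ : V (m + 1)} (hz₀w : Q w z₀ < 0) (hz₀A : Q (emat A) z₀ < 0) :
    ∀ v : V (m + 1), Q w v < 0 → Q (emat A) v < 0 := by
  have hbad : ∀ z : V (m + 1), Q w z < 0 → ∃ C ∈ 𝓑, Q (emat C) z < 0 := by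
    intro z hz
    by_contra hcon
    push_neg at hcon
    exact absurd (hgoodw z fun B hB => (hcon B hB)) (not_le.mpr hz)
  intro v hvw
  obtain ⟨B, hB, hvB⟩ := hbad v hvw
  by_cases hBA : B = A
  · exact hBA ▸ hvB
  exfalso
  -- choose the sign so that the cross term is nonpositive
  set ε : ℝ := if 0 ≤ CR w z₀ v then -1 else 1 with hε
  have hε2 : ε ^ 2 = 1 := by
    rw [hε]; split_ifs <;> norm_num
  set v' : V (m + 1) := ε • v with hv'
  have hcross : CR w z₀ v' ≤ 0 := by
    rw [hv', CR_smul_right, hε]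
    split_ifs with h
    · nlinarith
    · nlinarith [lt_of_not_ge h]
  have hQv' : Q w v' = Q w v := by rw [hv', Q_smul, hε2, one_mul]
  have hQBv' : Q (emat B) v' = Q (emat B) v := by rw [hv', Q_smul, hε2, one_mul]
  -- the segment
  set γ : ℝ → V (m + 1) := fun t => (1 - t) • z₀ + t • v' with hγ
  have hγ0 : γ 0 = z₀ := by rw [hγ]; simp
  have hγ1 : γ 1 = v' := by rw [hγ]; simp
  have hcontγ : ∀ c : EE (m + 1), Continuous fun t => Q c (γ t) := by
    intro c
    unfold Q
    apply continuous_finset_sum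
    intro p _
    have hco : ∀ i, Continuous fun t : ℝ => γ t i := by
      intro i
      have : (fun t : ℝ => γ t i) = fun t => (1 - t) * z₀ i + t * v' i := by
        funext t; rw [hγ]; simp
      rw [this]
      fun_prop
    exact continuous_const.mul ((hco p.1).mul (hco p.2))
  have hneg : ∀ t ∈ Set.Icc (0:ℝ) 1, Q w (γ t) < 0 := by
    intro t ht
    rw [hγ]
    simp only []
    rw [Q_seg]
    rw [hQv']
    exact seg_neg hz₀w hvw hcross ht.1 ht.2
  set U : Set ℝ := {t | Q (emat A) (γ t) < 0} with hU
  set Vv : Set ℝ := {t | ∃ C, (C ∈ 𝓑 ∧ C ≠ A) ∧ Q (emat C) (γ t) < 0} with hVv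
  have hopenU : IsOpen U := isOpen_lt (hcontγ _) continuous_const
  have hopenV : IsOpen Vv := by
    have : Vv = ⋃ C, ⋃ (_ : C ∈ 𝓑 ∧ C ≠ A), {t | Q (emat C) (γ t) < 0} := by
      ext t; simp [hVv]
    rw [this]
    exact isOpen_iUnion fun C => isOpen_iUnion fun _ =>
      isOpen_lt (hcontγ _) continuous_const
  have hcover : Set.Icc (0:ℝ) 1 ⊆ U ∪ Vv := by
    intro t ht
    obtain ⟨C, hC, hCneg⟩ := hbad (γ t) (hneg t ht)
    by_cases hCA : C = A
    · left; rw [hU]; exact Set.mem_setOf.mpr (hCA ▸ hCneg)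
    · right; exact ⟨C, ⟨hC, hCA⟩, hCneg⟩
  have h0 : (0:ℝ) ∈ Set.Icc (0:ℝ) 1 ∩ U := by
    constructor
    · exact ⟨le_refl 0, zero_le_one⟩
    · rw [hU]; exact Set.mem_setOf.mpr (by rw [hγ0]; exact hz₀A)
  have h1 : (1:ℝ) ∈ Set.Icc (0:ℝ) 1 ∩ Vv := by
    constructor
    · exact ⟨zero_le_one, le_refl 1⟩
    · exact ⟨B, ⟨hB, hBA⟩, by rw [hγ1, hQBv']; exact hvB⟩
  obtain ⟨t, htIcc, htU, htV⟩ :=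
    isPreconnected_Icc U Vv hopenU hopenV hcover ⟨0, h0⟩ ⟨1, h1⟩
  obtain ⟨C, ⟨hC, hCA⟩, hCneg⟩ := htV
  exact absurd (hF1 A hA C hC (fun h => hCA h.symm) (γ t) htU) (not_le.mpr hCneg)

/-- The "cone of good rank-one sums with at most `n*n+1` terms". -/
def Cset (Z : Set (V n)) : Set (EE n) :=
  {e | ∃ (w : Fin (n * n + 1) → ℝ) (g : Fin (n * n + 1) → V n),
    (∀ i, 0 ≤ w i) ∧ (∀ i, g i ∈ Z) ∧ e = ∑ i, w i • rho (g i)}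

def trE (e : EE n) : ℝ := ∑ i : Fin n, e (i, i)

lemma rho_zero : rho (0 : V n) = 0 := by
  funext p; simp [rho]

lemma trE_rho (z : V n) : trE (rho z) = ∑ i, z i * z i := rfl

lemma trE_sum {ι : Type*} (s : Finset ι) (F : ι → EE n) :
    trE (∑ i ∈ s, F i) = ∑ i ∈ s, trE (F i) := by
  unfold trE
  rw [Finset.sum_comm]
  refine Finset.sum_congr rfl fun i _ => ?_
  rw [Finset.sum_apply]

lemma trE_smul (a : ℝ) (e : EE n) : trE (a • e) = a * trE e := by
  unfold trE
  rw [Finset.mul_sum]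
  refine Finset.sum_congr rfl fun i _ => ?_
  simp

lemma trE_le (e : EE n) : trE e ≤ n * ‖e‖ := by
  have h : ∀ i : Fin n, e (i, i) ≤ ‖e‖ := fun i =>
    le_trans (le_abs_self _) (norm_le_pi_norm e (i, i))
  calc trE e ≤ ∑ _i : Fin n, ‖e‖ := Finset.sum_le_sum fun i _ => h i
  _ = n * ‖e‖ := by simp [Finset.sum_const, nsmul_eq_mul]

variable {Z : Set (V n)}

lemma zero_mem_Cset (hZ0 : (0 : V n) ∈ Z) : (0 : EE n) ∈ Cset Z := by
  refine ⟨fun _ => 0, fun _ => 0, fun i => le_refl 0, fun i => hZ0, ?_⟩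
  simp

lemma smul_rho_mem_Cset (hZ0 : (0 : V n) ∈ Z) {t : ℝ} (ht : 0 ≤ t) {z : V n} (hz : z ∈ Z) :
    t • rho z ∈ Cset Z := by
  refine ⟨fun i => if i = 0 then t else 0, fun i => if i = 0 then z else 0,
    fun i => by dsimp only; split_ifs <;> simp [ht], fun i => by
      dsimp only; split_ifs <;> simp [hz, hZ0], ?_⟩
  rw [Finset.sum_eq_single (0 : Fin (n * n + 1))]
  · simp
  · intro b _ hb; simp [hb]
  · simp

/-- normalize a representation: zero out weights of zero vectors -/
lemma Cset_norm_rep {e : EE n} (he : e ∈ Cset Z)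
    (hZtr : ∀ z ∈ Z, z = 0 ∨ ∑ i, z i * z i = 1) :
    ∃ (w : Fin (n * n + 1) → ℝ) (g : Fin (n * n + 1) → V n),
      (∀ i, 0 ≤ w i) ∧ (∀ i, g i ∈ Z) ∧ e = ∑ i, w i • rho (g i) ∧
      (∀ i, w i ≤ trE e) := by
  obtain ⟨w, g, hw, hg, hrep⟩ := he
  have hterm : ∀ j, w j • rho (g j) = (if g j = 0 then 0 else w j) • rho (g j) := by
    intro j
    split_ifs with h
    · rw [h, rho_zero]; simp
    · rfl
  have hrep' : e = ∑ j, (if g j = 0 then 0 else w j) • rho (g j) := by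
    rw [hrep]; exact Finset.sum_congr rfl fun j _ => hterm j
  refine ⟨fun i => if g i = 0 then 0 else w i, g,
    fun i => by dsimp only; split_ifs <;> simp [hw i], hg, hrep', ?_⟩
  · intro i
    set w' : Fin (n * n + 1) → ℝ := fun i => if g i = 0 then 0 else w i with hw'
    have hrep'' : e = ∑ j, w' j • rho (g j) := hrep'
    have htr : trE e = ∑ j, w' j := by
      rw [hrep'', trE_sum]
      refine Finset.sum_congr rfl fun j _ => ?_
      rw [trE_smul]
      rcases hZtr (g j) (hg j) with h | h
      · simp [hw', h]
      · rw [trE_rho, h, mul_one]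
    have hw'0 : ∀ j, 0 ≤ w' j := fun j => by rw [hw']; dsimp only; split_ifs <;> simp [hw j]
    have : w' i ≤ ∑ j, w' j :=
      Finset.single_le_sum (fun j _ => hw'0 j) (Finset.mem_univ i)
    rw [htr]
    exact this

lemma Cset_subset_smul_hull (hZ0 : (0 : V n) ∈ Z) {e : EE n} (he : e ∈ Cset Z) :
    ∃ t : ℝ, ∃ k ∈ convexHull ℝ (rho '' Z), 0 ≤ t ∧ e = t • k := by
  obtain ⟨w, g, hw, hg, hrep⟩ := he
  set T := ∑ i, w i with hT
  by_cases hT0 : T = 0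
  · have hwz : ∀ i ∈ Finset.univ, w i = 0 :=
      (Finset.sum_eq_zero_iff_of_nonneg (fun i _ => hw i)).mp (by rw [← hT]; exact hT0)
    refine ⟨0, rho 0, subset_convexHull ℝ _ ⟨0, hZ0, rfl⟩, le_refl 0, ?_⟩
    rw [hrep, zero_smul]
    exact Finset.sum_eq_zero fun i hi => by rw [hwz i hi, zero_smul]
  · have hTpos : 0 < T := lt_of_le_of_ne (Finset.sum_nonneg fun i _ => hw i) (Ne.symm hT0)
    refine ⟨T, ∑ i, (w i / T) • rho (g i), ?_, hTpos.le, ?_⟩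
    · refine (convex_convexHull ℝ _).sum_mem (fun i _ => div_nonneg (hw i) hTpos.le) ?_
        (fun i _ => subset_convexHull ℝ _ ⟨g i, hg i, rfl⟩)
      rw [← Finset.sum_div, ← hT, div_self hT0]
    · rw [hrep, Finset.smul_sum]
      refine Finset.sum_congr rfl fun i _ => ?_
      rw [smul_smul, mul_div_cancel₀ _ hT0]

lemma smul_hull_subset_Cset (hZ0 : (0 : V n) ∈ Z) {t : ℝ} (ht : 0 ≤ t)
    {k : EE n} (hk : k ∈ convexHull ℝ (rho '' Z)) : t • k ∈ Cset Z := by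
  rw [convexHull_eq_union] at hk
  simp only [Set.mem_iUnion] at hk
  obtain ⟨u, hu_sub, hu_ai, hk⟩ := hk
  -- cardinality bound
  have h3 : Module.finrank ℝ (EE n) = n * n := by
    rw [Module.finrank_pi]
    simp
  have hcard : u.card ≤ n * n + 1 := by
    have h1 := hu_ai.card_le_finrank_succ
    rw [Fintype.card_coe] at h1
    refine le_trans h1 ?_
    exact Nat.add_le_add_right (le_trans (Submodule.finrank_le _) (le_of_eq h3)) 1
  rw [Finset.convexHull_eq] at hk
  obtain ⟨wf, hwf0, hwf1, hkcm⟩ := hk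
  have hk' : k = ∑ y ∈ u, wf y • y := by
    rw [← hkcm, Finset.centerMass_eq_of_sum_1 _ _ hwf1]
    simp
  -- choose preimages
  have hzof : ∀ y ∈ u, ∃ z ∈ Z, rho z = y := fun y hy => by
    obtain ⟨z, hz, hzy⟩ := hu_sub hy
    exact ⟨z, hz, hzy⟩
  set zof : EE n → V n := fun y => if h : ∃ z ∈ Z, rho z = y then h.choose else 0 with hzofdef
  have hzofZ : ∀ y ∈ u, zof y ∈ Z ∧ rho (zof y) = y := by
    intro y hy
    have h := hzof y hy
    rw [hzofdef]
    simp only [dif_pos h]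
    exact ⟨h.choose_spec.1, h.choose_spec.2⟩
  -- enumerate
  set eqv := u.equivFin with heqv
  set w : Fin (n * n + 1) → ℝ := fun i =>
    if h : (i : ℕ) < u.card then t * wf ((eqv.symm ⟨i, h⟩ : ↥u) : EE n) else 0 with hwdef
  set g : Fin (n * n + 1) → V n := fun i =>
    if h : (i : ℕ) < u.card then zof ((eqv.symm ⟨i, h⟩ : ↥u) : EE n) else 0 with hgdef
  refine ⟨w, g, ?_, ?_, ?_⟩
  · intro i
    rw [hwdef]
    dsimp only
    split_ifs with h
    · exact mul_nonneg ht (hwf0 _ (eqv.symm ⟨i, h⟩).2)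
    · exact le_refl 0
  · intro i
    rw [hgdef]
    dsimp only
    split_ifs with h
    · exact (hzofZ _ (eqv.symm ⟨i, h⟩).2).1
    · exact hZ0
  · have hF0 : ∀ i : Fin (n * n + 1), ¬ ((i : ℕ) < u.card) → w i • rho (g i) = 0 := by
      intro i hi
      rw [hwdef]
      dsimp only
      rw [dif_neg hi, zero_smul]
    have hsum : ∑ i, w i • rho (g i)
        = ∑ i ∈ Finset.univ.map (Fin.castLEEmb hcard), w i • rho (g i) := by
      symm
      refine Finset.sum_subset (Finset.subset_univ _) ?_
      intro x _ hx
      refine hF0 x fun hlt => hx ?_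
      rw [Finset.mem_map]
      exact ⟨⟨(x : ℕ), hlt⟩, Finset.mem_univ _, by ext; simp⟩
    rw [hsum, Finset.sum_map]
    have hterm : ∀ j : Fin u.card,
        w (Fin.castLEEmb hcard j) • rho (g (Fin.castLEEmb hcard j))
          = (t * wf ((eqv.symm j : ↥u) : EE n)) • ((eqv.symm j : ↥u) : EE n) := by
      intro j
      have hj : ((Fin.castLEEmb hcard j : Fin (n * n + 1)) : ℕ) < u.card := by
        simp only [Fin.castLEEmb, Fin.coe_castLE]
        exact j.2
      rw [hwdef, hgdef]
      dsimp only
      rw [dif_pos hj, dif_pos hj]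
      have : (⟨((Fin.castLEEmb hcard j : Fin (n * n + 1)) : ℕ), hj⟩ : Fin u.card) = j := by
        ext; simp [Fin.castLEEmb]
      rw [this, (hzofZ _ (eqv.symm j).2).2]
    rw [Finset.sum_congr rfl fun j _ => hterm j]
    have : ∑ j : Fin u.card, (t * wf ((eqv.symm j : ↥u) : EE n)) • ((eqv.symm j : ↥u) : EE n)
        = ∑ y : ↥u, (t * wf (y : EE n)) • (y : EE n) :=
      Equiv.sum_comp eqv.symm (fun y : ↥u => (t * wf (y : EE n)) • (y : EE n))
    rw [this]
    rw [Finset.sum_coe_sort u (fun y => (t * wf y) • y)]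
    rw [hk', Finset.smul_sum]
    refine (Finset.sum_congr rfl fun y _ => ?_).symm
    rw [smul_smul]

lemma convex_Cset (hZ0 : (0 : V n) ∈ Z) : Convex ℝ (Cset Z) := by
  intro e₁ he₁ e₂ he₂ a b ha hb hab
  obtain ⟨t₁, k₁, hk₁, ht₁, rfl⟩ := Cset_subset_smul_hull hZ0 he₁
  obtain ⟨t₂, k₂, hk₂, ht₂, rfl⟩ := Cset_subset_smul_hull hZ0 he₂
  set T := a * t₁ + b * t₂ with hT
  by_cases hT0 : T = 0
  · have h1 : a * t₁ = 0 ∧ b * t₂ = 0 := by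
      constructor <;> nlinarith [mul_nonneg ha ht₁, mul_nonneg hb ht₂]
    show a • t₁ • k₁ + b • t₂ • k₂ ∈ Cset Z
    rw [smul_smul, smul_smul, h1.1, h1.2, zero_smul, zero_smul, add_zero]
    exact zero_mem_Cset hZ0
  · have hTpos : 0 < T := by
      rcases lt_or_eq_of_le (add_nonneg (mul_nonneg ha ht₁) (mul_nonneg hb ht₂)) with h | h
      · exact h
      · exact absurd h.symm hT0
    have hs1 : T * (a * t₁ / T) = a * t₁ := by field_simp
    have hs2 : T * (b * t₂ / T) = b * t₂ := by field_simp
    have hkey : a • t₁ • k₁ + b • t₂ • k₂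
        = T • ((a * t₁ / T) • k₁ + (b * t₂ / T) • k₂) := by
      rw [smul_add, smul_smul, smul_smul, smul_smul, smul_smul, hs1, hs2]
    rw [hkey]
    refine smul_hull_subset_Cset hZ0 hTpos.le ?_
    refine (convex_convexHull ℝ _) hk₁ hk₂ (by positivity) (by positivity) ?_
    rw [← add_div, ← hT, div_self hT0]


lemma isClosed_Cset (hZ0 : (0 : V n) ∈ Z) (hZc : IsCompact Z)
    (hZtr : ∀ z ∈ Z, z = 0 ∨ ∑ i, z i * z i = 1) : IsClosed (Cset Z) := by
  apply isClosed_of_closure_subset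
  intro e he
  obtain ⟨u, hu, hulim⟩ := mem_closure_iff_seq_limit.mp he
  set R : ℝ := ‖e‖ + 1 with hR
  set M : ℝ := (n : ℝ) * R with hM
  set φ : (Fin (n * n + 1) → ℝ) × (Fin (n * n + 1) → V n) → EE n :=
    fun p => ∑ i, p.1 i • rho (p.2 i) with hφ
  have hφc : Continuous φ := by
    apply continuous_finset_sum
    intro i _
    refine Continuous.smul ((continuous_apply i).comp continuous_fst) ?_
    apply continuous_pi
    intro q
    exact Continuous.mul (f := fun p : (Fin (n * n + 1) → ℝ) × (Fin (n * n + 1) → V n) => p.2 i q.1)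
      ((continuous_apply q.1).comp ((continuous_apply i).comp continuous_snd))
      ((continuous_apply q.2).comp ((continuous_apply i).comp continuous_snd))
  set D : Set (EE n) :=
    φ '' ((Set.univ.pi fun _ => Set.Icc (0:ℝ) M) ×ˢ (Set.univ.pi fun _ => Z)) with hD
  have hDcomp : IsCompact D :=
    (((isCompact_univ_pi fun _ => isCompact_Icc).prod (isCompact_univ_pi fun _ => hZc)).image hφc)
  have hDC : D ⊆ Cset Z := by
    rintro _ ⟨⟨w, g⟩, ⟨hw, hg⟩, rfl⟩
    exact ⟨w, g, fun i => (hw i (Set.mem_univ i)).1, fun i => hg i (Set.mem_univ i), rfl⟩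
  have hMR : ∀ e' : EE n, e' ∈ Cset Z → ‖e'‖ ≤ R → e' ∈ D := by
    intro e' he' hnorm
    obtain ⟨w, g, hw, hg, hrep, hbd⟩ := Cset_norm_rep he' hZtr
    refine ⟨(w, g), ⟨?_, ?_⟩, hrep.symm⟩
    · intro i _
      refine ⟨hw i, le_trans (hbd i) (le_trans (trE_le e') ?_)⟩
      rw [hM]
      exact mul_le_mul_of_nonneg_left hnorm (Nat.cast_nonneg n)
    · intro i _
      exact hg i
  obtain ⟨N, hN⟩ := Metric.tendsto_atTop.mp hulim 1 one_pos
  have hvD : ∀ k, u (k + N) ∈ D := by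
    intro k
    apply hMR _ (hu _)
    have h1 : dist (u (k + N)) e < 1 := hN _ (Nat.le_add_left N k)
    have h2 : ‖u (k + N)‖ - ‖e‖ ≤ dist (u (k + N)) e := by
      rw [dist_eq_norm]
      exact norm_sub_norm_le _ _
    rw [hR]
    linarith
  have hlim2 : Filter.Tendsto (fun k => u (k + N)) Filter.atTop (nhds e) :=
    hulim.comp (Filter.tendsto_add_atTop_nat N)
  exact hDC (hDcomp.isClosed.mem_of_tendsto hlim2 (Filter.Eventually.of_forall hvD))


lemma Q_zero (c : EE n) : Q c (0 : V n) = 0 := by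
  unfold Q; simp

lemma Q_cont (c : EE n) : Continuous (Q c) := by
  unfold Q
  exact continuous_finset_sum _ fun p _ =>
    continuous_const.mul ((continuous_apply p.1).mul (continuous_apply p.2))

lemma Q_emat_vecMulVec (B : Matrix (Fin n) (Fin n) ℝ) (x : V n) :
    ∑ i, ∑ j, B i j * (vecMulVec x x) i j = Q (emat B) x := by
  rw [← Q_emat_sum]
  unfold Q
  refine (Finset.sum_congr rfl fun p _ => ?_).symm
  show emat B p * (vecMulVec x x p.1 p.2) = emat B p * (x p.1 * x p.2)
  rw [Matrix.vecMulVec_apply]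

lemma psd_smul {X : Matrix (Fin n) (Fin n) ℝ} (hX : X.PosSemidef) {a : ℝ} (ha : 0 ≤ a) :
    (a • X).PosSemidef := by
  refine Matrix.PosSemidef.of_dotProduct_mulVec_nonneg ?_ ?_
  · show (a • X)ᴴ = a • X
    rw [Matrix.conjTranspose_smul, star_trivial, hX.1]
  · intro y
    rw [Matrix.smul_mulVec, dotProduct_smul, smul_eq_mul]
    exact mul_nonneg ha (hX.dotProduct_mulVec_nonneg y)

lemma psd_vecMulVec (x : V n) : (vecMulVec x x).PosSemidef := by
  refine Matrix.PosSemidef.of_dotProduct_mulVec_nonneg ?_ ?_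
  · show (vecMulVec x x)ᴴ = vecMulVec x x
    ext i j
    simp [Matrix.conjTranspose_apply, Matrix.vecMulVec_apply, mul_comm]
  · intro y
    have h : star y ⬝ᵥ (vecMulVec x x) *ᵥ y = (∑ j, x j * y j) * (∑ j, x j * y j) := by
      simp only [dotProduct, Matrix.mulVec, Matrix.vecMulVec_apply, Pi.star_apply,
        star_trivial]
      rw [Finset.sum_mul_sum]
      simp only [Finset.mul_sum]
      refine Finset.sum_congr rfl fun i _ => Finset.sum_congr rfl fun j _ => by ring
    rw [h]
    exact mul_self_nonneg _

-- multiset of columns of the sqrt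
open scoped MatrixOrder in
lemma sqrt_decomp {X : Matrix (Fin n) (Fin n) ℝ} (hX : X.PosSemidef) :
    ∃ s : Multiset (V n), (s.map rho).sum = (fun p : Fin n × Fin n => X p.1 p.2) := by
  set S := CFC.sqrt X with hS
  have hSS : S * S = X := CFC.sqrt_mul_sqrt_self X hX.nonneg
  have hherm : Sᴴ = S := (CFC.sqrt_nonneg X).posSemidef.1
  have hSsymm : ∀ i j, S i j = S j i := by
    intro i j
    have h := congrFun (congrFun hherm i) j
    rw [Matrix.conjTranspose_apply, star_trivial] at h
    exact h.symm
  refine ⟨Multiset.map (fun k : Fin n => (fun i => S i k : V n)) Finset.univ.val, ?_⟩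
  funext p
  have h1 : ((Multiset.map (fun k : Fin n => (fun i => S i k : V n)) Finset.univ.val).map rho).sum p
      = ∑ k : Fin n, rho (fun i => S i k) p := by
    rw [msum_apply, Multiset.map_map, Multiset.map_map]
    rfl
  rw [h1]
  have h2 : X p.1 p.2 = ∑ k, S p.1 k * S k p.2 := by
    rw [← hSS, Matrix.mul_apply]
  rw [h2]
  refine Finset.sum_congr rfl fun k _ => ?_
  unfold rho
  rw [hSsymm k p.2]


lemma smul_mem_Cset {Z : Set (V n)} {s : ℝ} (hs : 0 ≤ s) {e : EE n} (he : e ∈ Cset Z) :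
    s • e ∈ Cset Z := by
  obtain ⟨w, g, hw, hg, hrep⟩ := he
  refine ⟨fun i => s * w i, g, fun i => mul_nonneg hs (hw i), hg, ?_⟩
  rw [hrep, Finset.smul_sum]
  exact Finset.sum_congr rfl fun i _ => by rw [smul_smul]
end
end ROGaux

open ROGaux

/-- Condition (B)' alone implies that `J₊(𝓑)` is rank-one generated.
Here `n = m + 1 ≥ 2`, and for `u ∈ ℝ^m`, `[u;1]` is `Fin.snoc u 1`. -/
theorem ROG_of_conditionB' (m : ℕ) (hm : 1 ≤ m)
    (𝓑 : Set (Matrix (Fin (m + 1)) (Fin (m + 1)) ℝ)) (h𝓑 : ∀ B ∈ 𝓑, B.IsSymm)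
    (hB' : ∀ A ∈ 𝓑, ∀ B ∈ 𝓑, A ≠ B → ∀ u : Fin m → ℝ,
      ¬((Fin.snoc u 1) ⬝ᵥ A.mulVec (Fin.snoc u 1) < 0 ∧
        (Fin.snoc u 1) ⬝ᵥ B.mulVec (Fin.snoc u 1) ≤ 0)) :
    {X : Matrix (Fin (m + 1)) (Fin (m + 1)) ℝ |
        X.PosSemidef ∧ ∀ B ∈ 𝓑, 0 ≤ ∑ i, ∑ j, B i j * X i j}
      = convexHull ℝ
        ({X : Matrix (Fin (m + 1)) (Fin (m + 1)) ℝ |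
            X.PosSemidef ∧ ∀ B ∈ 𝓑, 0 ≤ ∑ i, ∑ j, B i j * X i j}
          ∩ {X : Matrix (Fin (m + 1)) (Fin (m + 1)) ℝ |
            ∃ x : Fin (m + 1) → ℝ, X = vecMulVec x x}) := by
  classical
  apply Set.Subset.antisymm
  · -- hard direction
    intro X hXmem
    obtain ⟨hXpsd, hXB⟩ := hXmem
    set Zs : Set (V (m + 1)) :=
      ({z | ∀ B ∈ 𝓑, 0 ≤ Q (emat B) z} ∩ {z | ∑ i, z i * z i = 1}) ∪ {0} with hZs
    have hZ0 : (0 : V (m + 1)) ∈ Zs := Or.inr rfl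
    have hZtr : ∀ z ∈ Zs, z = 0 ∨ ∑ i, z i * z i = 1 := by
      rintro z (⟨_, h⟩ | h)
      · exact Or.inr h
      · exact Or.inl h
    have hZclosed : IsClosed Zs := by
      refine IsClosed.union (IsClosed.inter ?_ ?_) isClosed_singleton
      · have hset : {z : V (m + 1) | ∀ B ∈ 𝓑, 0 ≤ Q (emat B) z}
            = ⋂ B ∈ 𝓑, {z | 0 ≤ Q (emat B) z} := by
          ext z; simp
        rw [hset]
        exact isClosed_biInter fun B _ => isClosed_le continuous_const (Q_cont _)
      · exact isClosed_eq
          (continuous_finset_sum _ fun i _ => (continuous_apply i).mul (continuous_apply i))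
          continuous_const
    have hZb : Zs ⊆ Metric.closedBall (0 : V (m + 1)) 1 := by
      rintro z (⟨_, h1⟩ | h0)
      · rw [Metric.mem_closedBall, dist_zero_right]
        refine (pi_norm_le_iff_of_nonneg zero_le_one).mpr fun i => ?_
        rw [Real.norm_eq_abs, abs_le_one_iff_mul_self_le_one]
        calc z i * z i ≤ ∑ j, z j * z j :=
              Finset.single_le_sum (fun j _ => mul_self_nonneg (z j)) (Finset.mem_univ i)
          _ = 1 := h1
      · have : z = 0 := h0
        simp [this]
    have hZc : IsCompact Zs :=
      IsCompact.of_isClosed_subset (isCompact_closedBall _ _) hZclosed hZb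
    have hgd_mem : ∀ z ∈ Zs, ∀ B ∈ 𝓑, 0 ≤ Q (emat B) z := by
      rintro z (⟨h, _⟩ | h0) B hB
      · exact h B hB
      · have : z = 0 := h0
        rw [this, Q_zero]
    obtain ⟨s₀, hs₀⟩ := sqrt_decomp hXpsd
    -- the key claim
    have hxC : (fun p : Fin (m + 1) × Fin (m + 1) => X p.1 p.2) ∈ Cset Zs := by
      by_contra hnot
      obtain ⟨f, u0, hfx, hfC⟩ :=
        geometric_hahn_banach_point_closed (convex_Cset hZ0) (isClosed_Cset hZ0 hZc hZtr) hnot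
      have hu0 : u0 < 0 := by
        have := hfC 0 (zero_mem_Cset hZ0)
        rwa [map_zero] at this
      have hfneg : f (fun p : Fin (m + 1) × Fin (m + 1) => X p.1 p.2) < 0 := lt_trans hfx hu0
      have hfpos : ∀ b ∈ Cset Zs, 0 ≤ f b := by
        intro b hb
        by_contra hneg
        push_neg at hneg
        have hs : 0 ≤ (u0 - 1) / f b := le_of_lt (div_pos_of_neg_of_neg (by linarith) hneg)
        have hmem := hfC (((u0 - 1) / f b) • b) (smul_mem_Cset hs hb)
        rw [f.map_smul, smul_eq_mul, div_mul_cancel₀ _ (ne_of_lt hneg)] at hmem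
        linarith
      have hfrep : ∀ e : EE (m + 1),
          f e = ∑ p, e p * f (fun q => if p = q then 1 else 0) := by
        intro e
        have h := LinearMap.pi_apply_eq_sum_univ (f.toLinearMap) e
        simpa [smul_eq_mul] using h
      set w : EE (m + 1) := fun p => f (fun q => if p = q then 1 else 0) with hwdef
      have hQw : ∀ v : V (m + 1), f (rho v) = Q w v := by
        intro v
        rw [hfrep]
        unfold Q rho
        exact Finset.sum_congr rfl fun p _ => by rw [hwdef]; ring
      have hgoodQw : ∀ z : V (m + 1), (∀ B ∈ 𝓑, 0 ≤ Q (emat B) z) → 0 ≤ Q w z := by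
        intro z hz
        by_cases hz0 : z = 0
        · rw [hz0, Q_zero]
        · have hex : ∃ i, z i ≠ 0 := by
            by_contra hc; push_neg at hc; exact hz0 (funext hc)
          obtain ⟨i, hi⟩ := hex
          have hTpos : 0 < ∑ j, z j * z j := by
            have h1 : 0 < z i * z i := mul_self_pos.mpr hi
            have h2 : z i * z i ≤ ∑ j, z j * z j :=
              Finset.single_le_sum (fun j _ => mul_self_nonneg (z j)) (Finset.mem_univ i)
            linarith
          set T : ℝ := ∑ j, z j * z j with hT
          have hsqT : ((Real.sqrt T)⁻¹) ^ 2 = T⁻¹ := by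
            rw [inv_pow, Real.sq_sqrt hTpos.le]
          have hzhZ : (Real.sqrt T)⁻¹ • z ∈ Zs := by
            left
            constructor
            · intro B hB
              rw [Q_smul]
              exact mul_nonneg (sq_nonneg _) (hz B hB)
            · show ∑ j, ((Real.sqrt T)⁻¹ • z) j * ((Real.sqrt T)⁻¹ • z) j = 1
              have h3 : ∀ j, ((Real.sqrt T)⁻¹ • z) j * ((Real.sqrt T)⁻¹ • z) j
                  = ((Real.sqrt T)⁻¹) ^ 2 * (z j * z j) := fun j => by
                simp only [Pi.smul_apply, smul_eq_mul]; ring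
              rw [Finset.sum_congr rfl fun j _ => h3 j, ← Finset.mul_sum, hsqT, ← hT,
                inv_mul_cancel₀ (ne_of_gt hTpos)]
          have hrhoz : rho z = T • rho ((Real.sqrt T)⁻¹ • z) := by
            rw [rho_smul, hsqT, smul_smul, mul_inv_cancel₀ (ne_of_gt hTpos), one_smul]
          have hmem : rho z ∈ Cset Zs := by
            rw [hrhoz]; exact smul_rho_mem_Cset hZ0 hTpos.le hzhZ
          rw [← hQw]
          exact hfpos _ hmem
      have hfx_eq : ∀ s' : Multiset (V (m + 1)),
          (s'.map rho).sum = (fun p : Fin (m + 1) × Fin (m + 1) => X p.1 p.2) →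
          f (fun p : Fin (m + 1) × Fin (m + 1) => X p.1 p.2) = (s'.map (Q w)).sum := by
        intro s' hs'
        rw [map_Q_sum, hs', hfrep]
        exact Finset.sum_congr rfl fun p _ => by rw [hwdef]; ring
      by_cases hN : ∀ v : V (m + 1), 0 ≤ Q w v
      · have h1 : 0 ≤ (s₀.map (Q w)).sum :=
          Multiset.sum_nonneg fun x hx => by
            obtain ⟨v, _, rfl⟩ := Multiset.mem_map.mp hx
            exact hN v
        rw [hfx_eq s₀ hs₀] at hfneg
        linarith
      · push_neg at hN
        obtain ⟨z₀, hz₀⟩ := hN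
        have hz₀bad : ∃ A ∈ 𝓑, Q (emat A) z₀ < 0 := by
          by_contra hc
          push_neg at hc
          exact absurd (hgoodQw z₀ fun B hB => hc B hB) (not_le.mpr hz₀)
        obtain ⟨A, hA, hz₀A⟩ := hz₀bad
        have huniq := unique_violator m 𝓑 (F1 m 𝓑 hB') w hgoodQw hA hz₀ hz₀A
        have hsumA : 0 ≤ (s₀.map (Q (emat A))).sum := by
          rw [map_Q_sum, hs₀, Q_emat_sum]
          exact hXB A hA
        obtain ⟨s', hs'sum, hs'good⟩ :=
          SZ (emat A) (Multiset.card s₀) s₀ (Multiset.countP_le_card _ _) hsumA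
        have h2 : 0 ≤ (s'.map (Q w)).sum :=
          Multiset.sum_nonneg fun x hx => by
            obtain ⟨v, hv, rfl⟩ := Multiset.mem_map.mp hx
            by_contra hneg
            push_neg at hneg
            exact absurd (huniq v hneg) (not_lt.mpr (hs'good v hv))
        rw [hfx_eq s' (by rw [hs'sum]; exact hs₀)] at hfneg
        linarith
    -- extract the representation and conclude
    obtain ⟨wts, g, hwts, hgZ, hrep⟩ := hxC
    have hgood_g : ∀ i, ∀ B ∈ 𝓑, 0 ≤ Q (emat B) (g i) := fun i => hgd_mem _ (hgZ i)
    have hdd : (0:ℝ) < ((m + 1) * (m + 1) + 1 : ℝ) := by positivity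
    set y : Fin ((m + 1) * (m + 1) + 1) → V (m + 1) :=
      fun i => Real.sqrt (((m + 1) * (m + 1) + 1 : ℝ) * wts i) • g i with hy
    have hsq : ∀ i, Real.sqrt (((m + 1) * (m + 1) + 1 : ℝ) * wts i) *
        Real.sqrt (((m + 1) * (m + 1) + 1 : ℝ) * wts i)
        = ((m + 1) * (m + 1) + 1 : ℝ) * wts i :=
      fun i => Real.mul_self_sqrt (mul_nonneg hdd.le (hwts i))
    have hXeq : X = ∑ i, ((((m + 1) * (m + 1) + 1 : ℝ))⁻¹) •
        vecMulVec (y i) (y i) := by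
      ext j k
      rw [Matrix.sum_apply]
      have hL : X j k = ∑ i, wts i * (g i j * g i k) := by
        have h := congrFun hrep (j, k)
        rw [Finset.sum_apply] at h
        simpa [rho, Pi.smul_apply, smul_eq_mul] using h
      rw [hL]
      refine Finset.sum_congr rfl fun i _ => ?_
      rw [Matrix.smul_apply, Matrix.vecMulVec_apply, hy]
      simp only [Pi.smul_apply, smul_eq_mul]
      have h5 := hsq i
      have hdd1 : ((((m:ℝ) + 1) * ((m:ℝ) + 1) + 1))⁻¹ * (((m:ℝ) + 1) * ((m:ℝ) + 1) + 1) = 1 :=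
        inv_mul_cancel₀ (ne_of_gt hdd)
      linear_combination (-((((m:ℝ) + 1) * ((m:ℝ) + 1) + 1)⁻¹ * (g i j * g i k))) * h5
        - (wts i * (g i j * g i k)) * hdd1
    have hMmem : ∀ i, vecMulVec (y i) (y i) ∈
        ({X : Matrix (Fin (m + 1)) (Fin (m + 1)) ℝ |
            X.PosSemidef ∧ ∀ B ∈ 𝓑, 0 ≤ ∑ i, ∑ j, B i j * X i j}
          ∩ {X : Matrix (Fin (m + 1)) (Fin (m + 1)) ℝ |
            ∃ x : Fin (m + 1) → ℝ, X = vecMulVec x x}) := by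
      intro i
      refine ⟨⟨psd_vecMulVec _, fun B hB => ?_⟩, ⟨y i, rfl⟩⟩
      rw [Q_emat_vecMulVec, hy, Q_smul]
      exact mul_nonneg (sq_nonneg _) (hgood_g i B hB)
    rw [hXeq]
    refine Convex.sum_mem (convex_convexHull ℝ _) (fun i _ => by positivity) ?_
      (fun i _ => subset_convexHull ℝ _ (hMmem i))
    rw [Finset.sum_const, Finset.card_univ]
    simp only [Fintype.card_fin, nsmul_eq_mul]
    push_cast
    exact mul_inv_cancel₀ (by positivity)
  · -- easy direction
    refine convexHull_min Set.inter_subset_left ?_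
    rintro X ⟨hX1, hX2⟩ Y ⟨hY1, hY2⟩ a b ha hb hab
    constructor
    · exact (psd_smul hX1 ha).add (psd_smul hY1 hb)
    · intro B hB
      have hsplit : ∑ i, ∑ j, B i j * (a • X + b • Y) i j
          = a * (∑ i, ∑ j, B i j * X i j) + b * (∑ i, ∑ j, B i j * Y i j) := by
        rw [Finset.mul_sum, Finset.mul_sum, ← Finset.sum_add_distrib]
        refine Finset.sum_congr rfl fun i _ => ?_
        rw [Finset.mul_sum, Finset.mul_sum, ← Finset.sum_add_distrib]
        refine Finset.sum_congr rfl fun j _ => ?_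
        simp only [Matrix.add_apply, Matrix.smul_apply, smul_eq_mul]
        ring
      rw [hsplit]
      exact add_nonneg (mul_nonneg ha (hX2 B hB)) (mul_nonneg hb (hY2 B hB))
end

section
/- Let n ≥ 1 and let 𝓑 ⊆ S^n satisfy Condition (D): there exist weights α_B > 0 (B ∈ 𝓑) such that α_A A + α_B B ∈ S^n_+ for every pair of distinct A, B ∈ 𝓑. Then 𝓑 satisfies Condition (B): for every B ∈ 𝓑 and every X ∈ S^n_+ with B•X = 0, one has A•X ≥ 0 for all A ∈ 𝓑. -/
open Matrix

lemma aux_psd_trace {n : ℕ} {M X : Matrix (Fin n) (Fin n) ℝ} (hM : M.PosSemidef)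
    (hX : X.PosSemidef) : 0 ≤ ∑ i, ∑ j, M i j * X i j := by
  obtain ⟨C, rfl⟩ : ∃ C : Matrix (Fin n) (Fin n) ℝ, X = Cᴴ * C := by
    open scoped MatrixOrder in
    open scoped Matrix.Norms.L2Operator in
    exact CStarAlgebra.nonneg_iff_eq_star_mul_self.mp hX.nonneg
  have key : ∀ i, 0 ≤ ∑ j, ∑ k, M j k * (C i j * C i k) := by
    intro i
    have := hM.dotProduct_mulVec_nonneg (fun j => C i j)
    simpa [dotProduct, mulVec, Finset.mul_sum, mul_comm, mul_left_comm] using this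
  calc (0:ℝ) ≤ ∑ i, ∑ j, ∑ k, M j k * (C i j * C i k) :=
        Finset.sum_nonneg fun i _ => key i
    _ = ∑ j, ∑ k, M j k * (Cᴴ * C) j k := by
        rw [Finset.sum_comm]
        refine Finset.sum_congr rfl fun j _ => ?_
        rw [Finset.sum_comm]
        simp [Matrix.mul_apply, Finset.mul_sum, conjTranspose_apply, mul_comm, mul_left_comm]

/-- Condition (D) implies Condition (B). -/
theorem conditionB_of_conditionD (n : ℕ) (hn : 1 ≤ n)
    (𝓑 : Set (Matrix (Fin n) (Fin n) ℝ)) (h𝓑 : ∀ B ∈ 𝓑, B.IsSymm)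
    (hD : ∃ α : Matrix (Fin n) (Fin n) ℝ → ℝ, (∀ B ∈ 𝓑, 0 < α B) ∧
      ∀ A ∈ 𝓑, ∀ B ∈ 𝓑, A ≠ B → (α A • A + α B • B).PosSemidef) :
    ∀ B ∈ 𝓑, ∀ X : Matrix (Fin n) (Fin n) ℝ, X.PosSemidef →
      (∑ i, ∑ j, B i j * X i j) = 0 → ∀ A ∈ 𝓑, 0 ≤ ∑ i, ∑ j, A i j * X i j := by
  obtain ⟨α, hpos, hpair⟩ := hD
  intro B hB X hX hBX A hA
  by_cases hAB : A = B
  · rw [hAB, hBX]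
  · have hM := hpair A hA B hB hAB
    have h0 := aux_psd_trace hM hX
    have hexp : ∑ i, ∑ j, (α A • A + α B • B) i j * X i j
        = α A * (∑ i, ∑ j, A i j * X i j) + α B * (∑ i, ∑ j, B i j * X i j) := by
      simp [Finset.mul_sum, Finset.sum_add_distrib, add_mul, mul_assoc]
    rw [hexp, hBX, mul_zero, add_zero] at h0
    exact nonneg_of_mul_nonneg_right h0 (hpos A hA)
end

section
/- Let B ∈ S^n and let X ∈ S^n_+ have rank r with B•X ≥ 0. Then there exist vectors x_1, …, x_r ∈ ℝ^n such that X = Σ_{i=1}^r x_i x_iᵀ and x_iᵀ B x_i ≥ 0 for every i = 1, …, r. -/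
open Matrix

private lemma bilin_symm {n : ℕ} {B : Matrix (Fin n) (Fin n) ℝ} (hB : B.IsSymm)
    (a b : Fin n → ℝ) : a ⬝ᵥ B.mulVec b = b ⬝ᵥ B.mulVec a := by
  simp only [dotProduct, mulVec, Finset.mul_sum]
  rw [Finset.sum_comm]
  refine Finset.sum_congr rfl fun i _ => Finset.sum_congr rfl fun j _ => ?_
  rw [hB.apply j i]
  ring

private lemma quad_expand {n : ℕ} (B : Matrix (Fin n) (Fin n) ℝ) (hB : B.IsSymm)
    (a b : Fin n → ℝ) (t : ℝ) :
    (a + t • b) ⬝ᵥ B.mulVec (a + t • b) =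
      a ⬝ᵥ B.mulVec a + 2 * t * (a ⬝ᵥ B.mulVec b) + t ^ 2 * (b ⬝ᵥ B.mulVec b) := by
  have h := bilin_symm hB b a
  simp only [mulVec_add, mulVec_smul, dotProduct_add, dotProduct_smul, add_dotProduct,
    smul_dotProduct, smul_eq_mul, h]
  ring

private lemma quad_expand' {n : ℕ} (B : Matrix (Fin n) (Fin n) ℝ) (hB : B.IsSymm)
    (a b : Fin n → ℝ) (t : ℝ) :
    (b - t • a) ⬝ᵥ B.mulVec (b - t • a) =
      b ⬝ᵥ B.mulVec b - 2 * t * (a ⬝ᵥ B.mulVec b) + t ^ 2 * (a ⬝ᵥ B.mulVec a) := by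
  have h := bilin_symm hB b a
  simp only [mulVec_sub, mulVec_smul, dotProduct_sub, dotProduct_smul, sub_dotProduct,
    smul_dotProduct, smul_eq_mul, h]
  ring

private lemma quad_smul {n : ℕ} (B : Matrix (Fin n) (Fin n) ℝ) (a : Fin n → ℝ) (t : ℝ) :
    (t • a) ⬝ᵥ B.mulVec (t • a) = t ^ 2 * (a ⬝ᵥ B.mulVec a) := by
  simp only [mulVec_smul, dotProduct_smul, smul_dotProduct, smul_eq_mul]
  ring

/-- Key combinatorial step: rotate a rank-one decomposition until all quadratic
values are nonnegative. -/
private lemma key {n : ℕ} (B : Matrix (Fin n) (Fin n) ℝ) (hB : B.IsSymm) (r : ℕ) :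
    ∀ (k : ℕ) (y : Fin r → Fin n → ℝ),
      (Finset.univ.filter fun i => y i ⬝ᵥ B.mulVec (y i) ≠ 0).card ≤ k →
      0 ≤ ∑ i, y i ⬝ᵥ B.mulVec (y i) →
      ∃ x : Fin r → Fin n → ℝ,
        (∑ i, vecMulVec (x i) (x i)) = (∑ i, vecMulVec (y i) (y i)) ∧
        ∀ i, 0 ≤ x i ⬝ᵥ B.mulVec (x i) := by
  intro k
  induction k with
  | zero =>
    intro y hcard _
    refine ⟨y, rfl, fun i => ?_⟩
    have : (Finset.univ.filter fun i => y i ⬝ᵥ B.mulVec (y i) ≠ 0) = ∅ :=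
      Finset.card_eq_zero.mp (Nat.le_zero.mp hcard)
    by_contra hlt
    have hi : i ∈ Finset.univ.filter fun i => y i ⬝ᵥ B.mulVec (y i) ≠ 0 := by
      simp only [Finset.mem_filter, Finset.mem_univ, true_and]
      intro h0
      rw [h0] at hlt; exact hlt le_rfl
    rw [this] at hi; exact absurd hi (Finset.notMem_empty i)
  | succ k ih =>
    intro y hcard hsum
    by_cases hall : ∀ i, 0 ≤ y i ⬝ᵥ B.mulVec (y i)
    · exact ⟨y, rfl, hall⟩
    push_neg at hall
    obtain ⟨i0, hi0⟩ := hall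
    -- find an index with positive value
    have hex : ∃ j0, 0 < y j0 ⬝ᵥ B.mulVec (y j0) := by
      by_contra hnone
      push_neg at hnone
      have : (∑ i, y i ⬝ᵥ B.mulVec (y i)) < ∑ _i : Fin r, (0 : ℝ) :=
        Finset.sum_lt_sum (fun i _ => hnone i) ⟨i0, Finset.mem_univ i0, hi0⟩
      simp only [Finset.sum_const_zero] at this
      linarith
    obtain ⟨j0, hj0⟩ := hex
    have hij : i0 ≠ j0 := fun h => by rw [h] at hi0; linarith
    set a := y i0 with ha
    set b := y j0 with hb
    set c := a ⬝ᵥ B.mulVec a with hc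
    set d := b ⬝ᵥ B.mulVec b with hd
    set β := a ⬝ᵥ B.mulVec b with hβ
    have hdpos : (0:ℝ) < d := hj0
    have hcneg : c < 0 := hi0
    have hdisc : 0 ≤ β ^ 2 - c * d := by nlinarith
    set α : ℝ := (-β + Real.sqrt (β ^ 2 - c * d)) / d with hα
    have hroot : c + 2 * α * β + α ^ 2 * d = 0 := by
      have hs : Real.sqrt (β ^ 2 - c * d) ^ 2 = β ^ 2 - c * d := Real.sq_sqrt hdisc
      have hd0 : d ≠ 0 := ne_of_gt hdpos
      have had : α * d = -β + Real.sqrt (β ^ 2 - c * d) := by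
        rw [hα, div_mul_cancel₀ _ hd0]
      apply mul_left_cancel₀ hd0
      linear_combination (β + α * d + Real.sqrt (β ^ 2 - c * d)) * had + hs
    set s : ℝ := Real.sqrt (1 + α ^ 2) with hs
    have hspos : 0 < s := Real.sqrt_pos.mpr (by positivity)
    have hs2 : s ^ 2 = 1 + α ^ 2 := Real.sq_sqrt (by positivity)
    set u : Fin n → ℝ := s⁻¹ • (a + α • b) with hu
    set w : Fin n → ℝ := s⁻¹ • (b - α • a) with hw
    have hQu : u ⬝ᵥ B.mulVec u = 0 := by
      rw [hu, quad_smul, quad_expand B hB]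
      have : c + 2 * α * β + α ^ 2 * d = 0 := hroot
      rw [← hc, ← hβ, ← hd, this, mul_zero]
    have hQw : w ⬝ᵥ B.mulVec w = c + d := by
      rw [hw, quad_smul, quad_expand' B hB, ← hc, ← hβ, ← hd]
      have h1 : s ⁻¹ ^ 2 = (1 + α ^ 2)⁻¹ := by rw [← hs2]; simp
      rw [h1]
      have h2 : d - 2 * α * β + α ^ 2 * c = (1 + α ^ 2) * (c + d) := by nlinarith [hroot]
      rw [h2]
      field_simp
    have hVsum : vecMulVec u u + vecMulVec w w = vecMulVec a a + vecMulVec b b := by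
      ext i j
      simp only [Matrix.add_apply, vecMulVec_apply, hu, hw, Pi.smul_apply, Pi.add_apply,
        Pi.sub_apply, smul_eq_mul]
      have hkey : (a i + α * b i) * (a j + α * b j) + (b i - α * a i) * (b j - α * a j)
          = (1 + α ^ 2) * (a i * a j + b i * b j) := by ring
      have hinv : s⁻¹ * s⁻¹ * (1 + α ^ 2) = 1 := by
        rw [← hs2]
        field_simp
      linear_combination (s⁻¹ * s⁻¹) * hkey + (a i * a j + b i * b j) * hinv
    -- the new family
    classical
    set y' : Fin r → Fin n → ℝ := Function.update (Function.update y i0 u) j0 w with hy'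
    have hgen : ∀ (M : Type) [AddCommMonoid M] (f : (Fin n → ℝ) → M),
        (∑ i, f (y' i)) = f w + (f u + ∑ i ∈ (Finset.univ \ {j0}) \ {i0}, f (y i)) := by
      intro M _ f
      have e1 : (∑ i, f (y' i)) =
          ∑ i, Function.update (Function.update (fun t => f (y t)) i0 (f u)) j0 (f w) i := by
        refine Finset.sum_congr rfl fun i _ => ?_
        rcases eq_or_ne i j0 with h | h
        · subst h; simp [hy']
        rcases eq_or_ne i i0 with h2 | h2
        · subst h2; simp [hy', Function.update_of_ne h]
        · simp [hy', Function.update_of_ne h, Function.update_of_ne h2]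
      rw [e1, Finset.sum_update_of_mem (Finset.mem_univ j0)]
      congr 1
      rw [Finset.sum_update_of_mem
        (Finset.mem_sdiff.mpr ⟨Finset.mem_univ i0, by simp [hij]⟩)]
    have hgen' : ∀ (M : Type) [AddCommMonoid M] (f : (Fin n → ℝ) → M),
        (∑ i, f (y i)) = f b + (f a + ∑ i ∈ (Finset.univ \ {j0}) \ {i0}, f (y i)) := by
      intro M _ f
      have e1 : (∑ i, f (y i)) =
          ∑ i, Function.update (Function.update (fun t => f (y t)) i0 (f a)) j0 (f b) i := by
        refine Finset.sum_congr rfl fun i _ => ?_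
        rcases eq_or_ne i j0 with h | h
        · subst h; simp [hb]
        rcases eq_or_ne i i0 with h2 | h2
        · subst h2; simp [Function.update_of_ne h, ha]
        · simp [Function.update_of_ne h, Function.update_of_ne h2]
      rw [e1, Finset.sum_update_of_mem (Finset.mem_univ j0)]
      congr 1
      rw [Finset.sum_update_of_mem
        (Finset.mem_sdiff.mpr ⟨Finset.mem_univ i0, by simp [hij]⟩)]
    -- sums of outer products agree
    have houter : (∑ i, vecMulVec (y' i) (y' i)) = ∑ i, vecMulVec (y i) (y i) := by
      rw [hgen _ (fun v => vecMulVec v v), hgen' _ (fun v => vecMulVec v v)]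
      rw [← add_assoc, ← add_assoc, add_comm (vecMulVec w w), hVsum,
        add_comm (vecMulVec a a)]
    -- quadratic values of new family
    have hq' : ∀ i, y' i ⬝ᵥ B.mulVec (y' i) =
        Function.update (Function.update (fun t => y t ⬝ᵥ B.mulVec (y t)) i0 0) j0 (c + d) i := by
      intro i
      rcases eq_or_ne i j0 with h | h
      · subst h; simp [hy', hQw]
      rcases eq_or_ne i i0 with h2 | h2
      · subst h2
        simp [hy', Function.update_of_ne h, hQu]
      · simp [hy', Function.update_of_ne h, Function.update_of_ne h2]
    -- new sum of quadratic values
    have hsum' : 0 ≤ ∑ i, y' i ⬝ᵥ B.mulVec (y' i) := by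
      have e1 : (∑ i, y' i ⬝ᵥ B.mulVec (y' i)) = ∑ i, y i ⬝ᵥ B.mulVec (y i) := by
        rw [hgen _ (fun v => v ⬝ᵥ B.mulVec v), hgen' _ (fun v => v ⬝ᵥ B.mulVec v), hQu, hQw,
          ← hc, ← hd]
        ring
      rw [e1]; exact hsum
    -- the filter for y' is contained in the old filter minus i0
    have hcard' : (Finset.univ.filter fun i => y' i ⬝ᵥ B.mulVec (y' i) ≠ 0).card ≤ k := by
      have hsub : (Finset.univ.filter fun i => y' i ⬝ᵥ B.mulVec (y' i) ≠ 0) ⊆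
          (Finset.univ.filter fun i => y i ⬝ᵥ B.mulVec (y i) ≠ 0).erase i0 := by
        intro t ht
        simp only [Finset.mem_filter, Finset.mem_univ, true_and] at ht
        rw [hq' t] at ht
        rcases eq_or_ne t j0 with h | h
        · subst h
          refine Finset.mem_erase.mpr ⟨hij.symm, ?_⟩
          simp only [Finset.mem_filter, Finset.mem_univ, true_and, ← hd]
          exact ne_of_gt hdpos
        rcases eq_or_ne t i0 with h2 | h2
        · subst h2
          rw [Function.update_of_ne h] at ht
          simp at ht
        · refine Finset.mem_erase.mpr ⟨h2, ?_⟩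
          simp only [Finset.mem_filter, Finset.mem_univ, true_and]
          rw [Function.update_of_ne h, Function.update_of_ne h2] at ht
          exact ht
      have hmem : i0 ∈ Finset.univ.filter fun i => y i ⬝ᵥ B.mulVec (y i) ≠ 0 := by
        simp only [Finset.mem_filter, Finset.mem_univ, true_and, ← hc]
        exact ne_of_lt hcneg
      calc (Finset.univ.filter fun i => y' i ⬝ᵥ B.mulVec (y' i) ≠ 0).card
          ≤ ((Finset.univ.filter fun i => y i ⬝ᵥ B.mulVec (y i) ≠ 0).erase i0).card :=
            Finset.card_le_card hsub
        _ = (Finset.univ.filter fun i => y i ⬝ᵥ B.mulVec (y i) ≠ 0).card - 1 :=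
            Finset.card_erase_of_mem hmem
        _ ≤ k := by omega
    obtain ⟨x, hx1, hx2⟩ := ih y' hcard' hsum'
    exact ⟨x, hx1.trans houter, hx2⟩

private lemma psd_decomp {n r : ℕ} (X : Matrix (Fin n) (Fin n) ℝ)
    (hX : X.PosSemidef) (hr : X.rank = r) :
    ∃ y : Fin r → Fin n → ℝ, X = ∑ i, vecMulVec (y i) (y i) := by
  classical
  have hH := hX.isHermitian
  set lam := hH.eigenvalues with hlam
  set V : Fin n → Fin n → ℝ := fun kk i => hH.eigenvectorBasis kk i with hV
  have hentry : ∀ i j, X i j = ∑ kk, V kk i * lam kk * V kk j := by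
    intro i j
    conv_lhs => rw [hH.spectral_theorem, Unitary.conjStarAlgAut_apply]
    rw [Matrix.mul_apply]
    refine Finset.sum_congr rfl fun kk _ => ?_
    rw [Matrix.mul_diagonal]
    rfl
  set w : Fin n → Fin n → ℝ := fun kk i => Real.sqrt (lam kk) * V kk i with hwdef
  have hX2 : X = ∑ kk, vecMulVec (w kk) (w kk) := by
    ext i j
    rw [hentry i j, Matrix.sum_apply]
    refine Finset.sum_congr rfl fun kk _ => ?_
    simp only [vecMulVec_apply, hwdef]
    have hss : Real.sqrt (lam kk) ^ 2 = lam kk :=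
      Real.sq_sqrt (hX.eigenvalues_nonneg kk)
    linear_combination (V kk i * V kk j) * hss.symm
  have hcard : Fintype.card {kk // lam kk ≠ 0} = r := by
    rw [← hH.rank_eq_card_non_zero_eigs, hr]
  set e : Fin r ≃ {kk // lam kk ≠ 0} := (Fintype.equivFinOfCardEq hcard).symm with he
  refine ⟨fun i => w (e i), ?_⟩
  rw [hX2]
  have h1 : (∑ i : Fin r, vecMulVec (w (e i)) (w (e i))) =
      ∑ t : {kk // lam kk ≠ 0}, vecMulVec (w (t : Fin n)) (w (t : Fin n)) :=
    Equiv.sum_comp e (fun t => vecMulVec (w (t : Fin n)) (w (t : Fin n)))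
  have h2 : (∑ kk ∈ Finset.univ.filter fun kk => lam kk ≠ 0, vecMulVec (w kk) (w kk)) =
      ∑ t : {kk // lam kk ≠ 0}, vecMulVec (w (t : Fin n)) (w (t : Fin n)) :=
    Finset.sum_subtype (Finset.univ.filter fun kk => lam kk ≠ 0)
      (fun x => by simp) (fun kk => vecMulVec (w kk) (w kk))
  have h3 : (∑ kk ∈ Finset.univ.filter fun kk => lam kk ≠ 0, vecMulVec (w kk) (w kk)) =
      ∑ kk, vecMulVec (w kk) (w kk) := by
    refine Finset.sum_subset (Finset.filter_subset _ _) fun kk _ hkk => ?_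
    simp only [Finset.mem_filter, Finset.mem_univ, true_and, not_not] at hkk
    ext i j
    simp [vecMulVec_apply, hwdef, hkk]
  rw [h1, ← h2, h3]

/-- rank-one decomposition of a PSD matrix `X` of rank `r` with
`B • X ≥ 0`, all of whose rank-one terms satisfy `xᵢᵀ B xᵢ ≥ 0`. -/
theorem rankOne_decomposition_nonneg (n r : ℕ)
    (B X : Matrix (Fin n) (Fin n) ℝ) (hB : B.IsSymm)
    (hX : X.PosSemidef) (hr : X.rank = r)
    (hBX : 0 ≤ ∑ i, ∑ j, B i j * X i j) :
    ∃ x : Fin r → Fin n → ℝ,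
      X = ∑ i, vecMulVec (x i) (x i) ∧ ∀ i, 0 ≤ (x i) ⬝ᵥ B.mulVec (x i) := by
  classical
  obtain ⟨y, hy⟩ := psd_decomp X hX hr
  have hterm : ∀ k : Fin r, y k ⬝ᵥ B.mulVec (y k) = ∑ i, ∑ j, B i j * (y k i * y k j) := by
    intro k
    simp only [dotProduct, mulVec, Finset.mul_sum]
    exact Finset.sum_congr rfl fun i _ => Finset.sum_congr rfl fun j _ => by ring
  have htrace : (∑ i, ∑ j, B i j * X i j) = ∑ k, y k ⬝ᵥ B.mulVec (y k) :=
    calc (∑ i, ∑ j, B i j * X i j)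
        = ∑ i, ∑ j, ∑ k, B i j * (y k i * y k j) := by
          rw [hy]
          exact Finset.sum_congr rfl fun i _ => Finset.sum_congr rfl fun j _ => by
            simp [Matrix.sum_apply, vecMulVec_apply, Finset.mul_sum]
      _ = ∑ i, ∑ k, ∑ j, B i j * (y k i * y k j) :=
          Finset.sum_congr rfl fun i _ => by exact Finset.sum_comm
      _ = ∑ k, ∑ i, ∑ j, B i j * (y k i * y k j) := by exact Finset.sum_comm
      _ = ∑ k, y k ⬝ᵥ B.mulVec (y k) :=
          Finset.sum_congr rfl fun k _ => (hterm k).symm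
  have hsum : 0 ≤ ∑ k, y k ⬝ᵥ B.mulVec (y k) := htrace ▸ hBX
  obtain ⟨x, hx1, hx2⟩ := key B hB r
    ((Finset.univ.filter fun i => y i ⬝ᵥ B.mulVec (y i) ≠ 0).card) y le_rfl hsum
  exact ⟨x, by rw [hy, hx1], hx2⟩
end

section
/- Let B ∈ S^n and let x_1, x_2 ∈ ℝ^n satisfy x_1ᵀBx_1 < 0 < x_2ᵀBx_2. Then there exists a real root s̄ of the quadratic equation (x_1ᵀBx_1)s² + 2(x_1ᵀBx_2)s + x_2ᵀBx_2 = 0, and for any such root, the vectors x̄_1 = (s̄ x_1 + x_2)/√(s̄²+1) and x̄_2 = (−x_1 + s̄ x_2)/√(s̄²+1) satisfy x̄_1ᵀBx̄_1 = 0 and x̄_1 x̄_1ᵀ + x̄_2 x̄_2ᵀ = x_1 x_1ᵀ + x_2 x_2ᵀ. -/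
open Matrix

/-- the rotation step in the rank-one decomposition procedure. -/
theorem rankOne_rotation_step (n : ℕ) (B : Matrix (Fin n) (Fin n) ℝ) (hB : B.IsSymm)
    (x₁ x₂ : Fin n → ℝ)
    (h₁ : x₁ ⬝ᵥ B.mulVec x₁ < 0) (h₂ : 0 < x₂ ⬝ᵥ B.mulVec x₂) :
    (∃ s : ℝ, (x₁ ⬝ᵥ B.mulVec x₁) * s ^ 2 + 2 * (x₁ ⬝ᵥ B.mulVec x₂) * s
        + x₂ ⬝ᵥ B.mulVec x₂ = 0) ∧
    ∀ s : ℝ, (x₁ ⬝ᵥ B.mulVec x₁) * s ^ 2 + 2 * (x₁ ⬝ᵥ B.mulVec x₂) * s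
        + x₂ ⬝ᵥ B.mulVec x₂ = 0 →
      ((Real.sqrt (s ^ 2 + 1))⁻¹ • (s • x₁ + x₂)) ⬝ᵥ
          B.mulVec ((Real.sqrt (s ^ 2 + 1))⁻¹ • (s • x₁ + x₂)) = 0 ∧
      vecMulVec ((Real.sqrt (s ^ 2 + 1))⁻¹ • (s • x₁ + x₂))
          ((Real.sqrt (s ^ 2 + 1))⁻¹ • (s • x₁ + x₂))
        + vecMulVec ((Real.sqrt (s ^ 2 + 1))⁻¹ • (-x₁ + s • x₂))
          ((Real.sqrt (s ^ 2 + 1))⁻¹ • (-x₁ + s • x₂))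
        = vecMulVec x₁ x₁ + vecMulVec x₂ x₂ := by
  set a := x₁ ⬝ᵥ B.mulVec x₁ with ha
  set b := x₁ ⬝ᵥ B.mulVec x₂ with hb
  set c := x₂ ⬝ᵥ B.mulVec x₂ with hc
  have hsym : x₂ ⬝ᵥ B.mulVec x₁ = b := by
    rw [hb, Matrix.dotProduct_mulVec, dotProduct_comm, ← Matrix.mulVec_transpose,
      hB.eq]
  constructor
  · have hd : (0:ℝ) ≤ b ^ 2 - a * c := by nlinarith
    obtain ⟨t, ht⟩ : ∃ t : ℝ, t ^ 2 = b ^ 2 - a * c :=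
      ⟨Real.sqrt (b ^ 2 - a * c), Real.sq_sqrt hd⟩
    refine ⟨(-b + t) / a, ?_⟩
    have hane : a ≠ 0 := ne_of_lt h₁
    field_simp
    nlinarith [ht]
  · intro s hroot
    have hpos : (0:ℝ) < s ^ 2 + 1 := by positivity
    have hsq : Real.sqrt (s ^ 2 + 1) ^ 2 = s ^ 2 + 1 := Real.sq_sqrt hpos.le
    have hsne : Real.sqrt (s ^ 2 + 1) ≠ 0 := by positivity
    have hexp : (s • x₁ + x₂) ⬝ᵥ B.mulVec (s • x₁ + x₂)
        = a * s ^ 2 + 2 * b * s + c := by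
      simp only [Matrix.mulVec_add, Matrix.mulVec_smul, dotProduct_add,
        add_dotProduct, smul_dotProduct, dotProduct_smul,
        smul_eq_mul, ← ha, ← hb, ← hc, hsym]
      ring
    constructor
    · simp only [smul_dotProduct, Matrix.mulVec_smul, dotProduct_smul,
        smul_eq_mul, hexp, hroot, mul_zero]
    · ext i j
      simp only [Matrix.add_apply, Matrix.vecMulVec_apply, Pi.smul_apply, Pi.add_apply,
        Pi.neg_apply, smul_eq_mul]
      have : (Real.sqrt (s ^ 2 + 1))⁻¹ * (Real.sqrt (s ^ 2 + 1))⁻¹ = (s ^ 2 + 1)⁻¹ := by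
        rw [← mul_inv]
        congr 1
        nlinarith [hsq]
      field_simp
      rw [hsq]; ring
end

section
/- For a ∈ ℤ and r ≥ 0 define the 3×3 symmetric matrix B(a,r) with rows (a² − 1/4, −a, 0), (−a, 1, 0), (0, 0, r²). Then for all integers a_1 ≠ a_2 and all reals r_1, r_2 ≥ 0, the matrix B(a_1,r_1) + B(a_2,r_2) is positive semidefinite. -/
open Matrix

/-- The matrix `B(a,r)` of Instance 2.4 (hyperbola family). -/
noncomputable def hypMat (a : ℤ) (r : ℝ) : Matrix (Fin 3) (Fin 3) ℝ :=
  !![(a : ℝ) ^ 2 - 1 / 4, -(a : ℝ), 0;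
     -(a : ℝ), 1, 0;
     0, 0, r ^ 2]

/-- for distinct integers `a₁ ≠ a₂` and `r₁, r₂ ≥ 0`,
`B(a₁,r₁) + B(a₂,r₂)` is positive semidefinite. -/
theorem hypMat_add_posSemidef (a₁ a₂ : ℤ) (ha : a₁ ≠ a₂)
    (r₁ r₂ : ℝ) (hr₁ : 0 ≤ r₁) (hr₂ : 0 ≤ r₂) :
    (hypMat a₁ r₁ + hypMat a₂ r₂).PosSemidef := by
  have hgap : (1 : ℝ) ≤ ((a₁ : ℝ) - a₂) ^ 2 := by
    have h : (1 : ℤ) ≤ (a₁ - a₂) ^ 2 := by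
      rcases lt_or_gt_of_ne (sub_ne_zero.mpr ha) with h | h <;> nlinarith
    exact_mod_cast h
  rw [Matrix.posSemidef_iff_dotProduct_mulVec]
  constructor
  · ext i j
    fin_cases i <;> fin_cases j <;>
      simp [hypMat, Matrix.conjTranspose_apply, Matrix.add_apply]
  · intro x
    have hx : star x ⬝ᵥ (hypMat a₁ r₁ + hypMat a₂ r₂) *ᵥ x
        = ((a₁ : ℝ) * x 0 - x 1) ^ 2 + ((a₂ : ℝ) * x 0 - x 1) ^ 2
          - (x 0) ^ 2 / 2 + (r₁ ^ 2 + r₂ ^ 2) * (x 2) ^ 2 := by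
      simp [hypMat, dotProduct, Matrix.mulVec, Fin.sum_univ_three, Matrix.add_apply]
      ring
    rw [RCLike.nonneg_iff]
    constructor
    · simp only [RCLike.re_to_real]
      rw [hx]
      nlinarith [sq_nonneg (((a₁:ℝ) * x 0 - x 1) - ((a₂:ℝ) * x 0 - x 1)),
        sq_nonneg (((a₁:ℝ) * x 0 - x 1) + ((a₂:ℝ) * x 0 - x 1)),
        sq_nonneg (x 0), sq_nonneg (x 2), sq_nonneg r₁, sq_nonneg r₂]
    · simp
end

section
/- For a ∈ ℤ and r ≥ 1 define the 3×3 symmetric matrix B(a,r) with rows (a², −a, −1/2), (−a, 1, 0), (−1/2, 0, r). Then for all integers a_1 ≠ a_2 and all reals r_1, r_2 ≥ 1, the matrix B(a_1,r_1) + B(a_2,r_2) is positive semidefinite. -/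
open Matrix

/-- The matrix `B(a,r)` of Instance 2.5 (parabola family). -/
noncomputable def parMat (a : ℤ) (r : ℝ) : Matrix (Fin 3) (Fin 3) ℝ :=
  !![(a : ℝ) ^ 2, -(a : ℝ), -(1 / 2);
     -(a : ℝ), 1, 0;
     -(1 / 2), 0, r]

/-- for distinct integers `a₁ ≠ a₂` and `r₁, r₂ ≥ 1`,
`B(a₁,r₁) + B(a₂,r₂)` is positive semidefinite. -/
theorem parMat_add_posSemidef (a₁ a₂ : ℤ) (ha : a₁ ≠ a₂)
    (r₁ r₂ : ℝ) (hr₁ : 1 ≤ r₁) (hr₂ : 1 ≤ r₂) :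
    (parMat a₁ r₁ + parMat a₂ r₂).PosSemidef := by
  have hd : (1 : ℝ) ≤ ((a₁ : ℝ) - a₂) ^ 2 := by
    have h : (1 : ℤ) ≤ (a₁ - a₂) ^ 2 := by
      have h0 : (0:ℤ) < (a₁ - a₂) ^ 2 :=
        lt_of_le_of_ne (sq_nonneg _) (Ne.symm (pow_ne_zero _ (sub_ne_zero_of_ne ha)))
      omega
    calc (1 : ℝ) ≤ ((a₁ - a₂ : ℤ) : ℝ) ^ 2 := by exact_mod_cast h
      _ = ((a₁ : ℝ) - a₂) ^ 2 := by push_cast; ring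
  rw [Matrix.posSemidef_iff_dotProduct_mulVec]
  constructor
  · unfold parMat
    ext i j
    fin_cases i <;> fin_cases j <;>
      simp [Matrix.IsHermitian, Matrix.conjTranspose, Matrix.add_apply,
        Matrix.vecHead, Matrix.vecTail]
  · intro x
    set u := x 0
    set v := x 1
    set w := x 2
    have : x ⬝ᵥ (parMat a₁ r₁ + parMat a₂ r₂) *ᵥ x =
        ((a₁ : ℝ) ^ 2 + (a₂ : ℝ) ^ 2) * u ^ 2 + 2 * v ^ 2 + (r₁ + r₂) * w ^ 2
          - 2 * ((a₁ : ℝ) + a₂) * u * v - 2 * u * w := by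
      simp [parMat, mulVec, dotProduct, Fin.sum_univ_three, Matrix.add_apply]
      ring
    rw [show star x = x from rfl, RCLike.nonneg_iff]
    simp only [RCLike.re_to_real, RCLike.im_to_real, this]
    constructor
    · nlinarith [sq_nonneg (((a₁ : ℝ) + a₂) * u - 2 * v), sq_nonneg (u - 2 * w),
        sq_nonneg u, sq_nonneg w, mul_nonneg (sub_nonneg.2 hd) (sq_nonneg u),
        mul_nonneg (sub_nonneg.2 hr₁) (sq_nonneg w),
        mul_nonneg (sub_nonneg.2 hr₂) (sq_nonneg w)]
    · trivial
end

section
/- Let n ≥ 2. For a ∈ ℝ^{n-1} and ρ > 0, define B(a,ρ) ∈ S^n as the block matrix with blocks (I_{n-1}, −a; −aᵀ, aᵀa − ρ²), where I_{n-1} is the (n−1)×(n−1) identity. Then for all integer vectors a_1, a_2 ∈ ℤ^{n-1} with a_1 ≠ a_2 and all ρ_1, ρ_2 ∈ (0, 1/2], the matrix B(a_1,ρ_1) + B(a_2,ρ_2) is positive semidefinite. -/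
open Matrix

/-- The ball-constraint matrix `B(a,ρ) ∈ S^{m+1}` with blocks
`(I_m, -a; -aᵀ, aᵀa - ρ²)`. -/
noncomputable def ballMat (m : ℕ) (a : Fin m → ℝ) (ρ : ℝ) :
    Matrix (Fin (m + 1)) (Fin (m + 1)) ℝ := fun i j =>
  if hi : (i : ℕ) < m then
    if hj : (j : ℕ) < m then (if i = j then 1 else 0)
    else -(a ⟨i, hi⟩)
  else
    if hj : (j : ℕ) < m then -(a ⟨j, hj⟩)
    else (∑ k, (a k) ^ 2) - ρ ^ 2

lemma ballMat_isHermitian (m : ℕ) (a : Fin m → ℝ) (ρ : ℝ) :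
    (ballMat m a ρ).IsHermitian := by
  ext i j
  simp only [ballMat, conjTranspose_apply, star_trivial]
  rcases Nat.lt_or_ge (i : ℕ) m with hi | hi <;>
    rcases Nat.lt_or_ge (j : ℕ) m with hj | hj <;>
      simp [hi, hj, Nat.not_lt.mpr, eq_comm, Fin.ext_iff]

lemma ballMat_quad (m : ℕ) (a : Fin m → ℝ) (ρ : ℝ) (x : Fin (m + 1) → ℝ) :
    x ⬝ᵥ (ballMat m a ρ *ᵥ x) =
      (∑ i : Fin m, (x i.castSucc - x (Fin.last m) * a i) ^ 2)
        - ρ ^ 2 * (x (Fin.last m)) ^ 2 := by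
  set t := x (Fin.last m) with ht
  simp only [dotProduct, mulVec, ballMat, Fin.sum_univ_castSucc, Fin.coe_castSucc,
    Fin.is_lt, dif_pos, Fin.val_last, lt_irrefl, dif_neg, Fin.eta, not_lt.mpr (le_refl m),
    dite_false, Fin.castSucc_inj, ite_mul, mul_ite, one_mul, zero_mul, mul_zero,
    Finset.sum_ite_eq, Finset.mem_univ, if_true]
  have expand : ∑ i : Fin m, (x i.castSucc - t * a i) ^ 2
      = ∑ i : Fin m, x i.castSucc * (x i.castSucc + -a i * t)
        + (t * ∑ i : Fin m, -a i * x i.castSucc + (t * ∑ k : Fin m, (a k) ^ 2) * t) := by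
    rw [Finset.mul_sum, Finset.mul_sum, Finset.sum_mul, ← Finset.sum_add_distrib,
      ← Finset.sum_add_distrib]
    exact Finset.sum_congr rfl (fun i _ => by ring)
  rw [expand]; ring

/-- for distinct integer vectors `a₁ ≠ a₂` and `ρ₁, ρ₂ ∈ (0, 1/2]`,
`B(a₁,ρ₁) + B(a₂,ρ₂)` is positive semidefinite. -/
theorem ballMat_add_posSemidef (m : ℕ) (hm : 1 ≤ m)
    (a₁ a₂ : Fin m → ℤ) (ha : a₁ ≠ a₂)
    (ρ₁ ρ₂ : ℝ) (hρ₁ : 0 < ρ₁) (hρ₁' : ρ₁ ≤ 1 / 2) (hρ₂ : 0 < ρ₂) (hρ₂' : ρ₂ ≤ 1 / 2) :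
    (ballMat m (fun k => (a₁ k : ℝ)) ρ₁ + ballMat m (fun k => (a₂ k : ℝ)) ρ₂).PosSemidef := by
  rw [posSemidef_iff_dotProduct_mulVec]
  constructor
  · exact (ballMat_isHermitian m _ ρ₁).add (ballMat_isHermitian m _ ρ₂)
  · intro x
    rw [add_mulVec, dotProduct_add]
    simp only [star_trivial]
    rw [ballMat_quad, ballMat_quad]
    set t := x (Fin.last m) with htdef
    obtain ⟨k, hk⟩ : ∃ k, a₁ k ≠ a₂ k := by
      by_contra h
      push_neg at h
      exact ha (funext h)
    have hd : (1 : ℝ) ≤ ((a₂ k : ℝ) - (a₁ k : ℝ)) ^ 2 := by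
      have h1 : (1 : ℤ) ≤ (a₂ k - a₁ k) ^ 2 := by
        have h0 : a₂ k - a₁ k ≠ 0 := sub_ne_zero.mpr (Ne.symm hk)
        nlinarith [sq_pos_of_ne_zero h0, Int.one_le_abs (by simpa using h0 : a₂ k - a₁ k ≠ 0)]
      calc (1 : ℝ) ≤ (((a₂ k - a₁ k) ^ 2 : ℤ) : ℝ) := by exact_mod_cast h1
        _ = ((a₂ k : ℝ) - (a₁ k : ℝ)) ^ 2 := by push_cast; ring
    have hterm : t ^ 2 * ((a₂ k : ℝ) - (a₁ k : ℝ)) ^ 2 / 2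
        ≤ (x k.castSucc - t * (a₁ k : ℝ)) ^ 2 + (x k.castSucc - t * (a₂ k : ℝ)) ^ 2 := by
      nlinarith [sq_nonneg ((x k.castSucc - t * (a₁ k : ℝ)) + (x k.castSucc - t * (a₂ k : ℝ)))]
    have hsum : (x k.castSucc - t * (a₁ k : ℝ)) ^ 2 + (x k.castSucc - t * (a₂ k : ℝ)) ^ 2
        ≤ (∑ i : Fin m, (x i.castSucc - t * (a₁ i : ℝ)) ^ 2)
          + ∑ i : Fin m, (x i.castSucc - t * (a₂ i : ℝ)) ^ 2 := by
      gcongr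
      · exact Finset.single_le_sum
          (fun i _ => sq_nonneg (x i.castSucc - t * (a₁ i : ℝ))) (Finset.mem_univ k)
      · exact Finset.single_le_sum
          (fun i _ => sq_nonneg (x i.castSucc - t * (a₂ i : ℝ))) (Finset.mem_univ k)
    have ht2 : t ^ 2 / 2 ≤ t ^ 2 * ((a₂ k : ℝ) - (a₁ k : ℝ)) ^ 2 / 2 := by
      nlinarith [sq_nonneg t]
    have h1 : ρ₁ ^ 2 ≤ 1 / 4 := by nlinarith
    have h2 : ρ₂ ^ 2 ≤ 1 / 4 := by nlinarith
    have hρ : (ρ₁ ^ 2 + ρ₂ ^ 2) * t ^ 2 ≤ t ^ 2 / 2 := by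
      nlinarith [mul_le_mul_of_nonneg_right (add_le_add h1 h2) (sq_nonneg t)]
    linarith
end

section
/- Let H ∈ S^n, and suppose X̄ ∈ S^n_+ satisfies H•X̄ = 1 and Ȳ ∈ S^n_+ satisfies Ȳ•X̄ = 0. Let r = rank X̄. Then r ≥ 1, and there exists x ∈ ℝ^n such that the rank-one matrix X̃ = xxᵀ satisfies H•X̃ = 1 and Ȳ•X̃ = 0; moreover x can be chosen of the form x = x_j/√τ where X̄ = Σ_{i=1}^r x_i x_iᵀ is a rank-one decomposition, τ = x_jᵀHx_j ≥ 1/r, and Ȳ•x_i x_iᵀ = 0 for every i = 1, …, r. -/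
open Matrix

private lemma trace_form {n : ℕ} (M : Matrix (Fin n) (Fin n) ℝ) (u : Fin n → ℝ) :
    (∑ a, ∑ b, M a b * vecMulVec u u a b) = u ⬝ᵥ M.mulVec u := by
  simp only [vecMulVec_apply, dotProduct, mulVec, Finset.mul_sum]
  exact Finset.sum_congr rfl fun a _ => Finset.sum_congr rfl fun b _ => by ring

private lemma trace_form_sum {n r : ℕ} (M : Matrix (Fin n) (Fin n) ℝ)
    (x : Fin r → Fin n → ℝ) :
    (∑ a, ∑ b, M a b * (∑ k, vecMulVec (x k) (x k)) a b)
      = ∑ k, x k ⬝ᵥ M.mulVec (x k) := by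
  simp only [Matrix.sum_apply, Finset.mul_sum]
  have h1 : ∀ a : Fin n, (∑ b, ∑ k, M a b * vecMulVec (x k) (x k) a b)
      = ∑ k, ∑ b, M a b * vecMulVec (x k) (x k) a b := fun a => Finset.sum_comm
  simp only [h1]
  rw [Finset.sum_comm]
  exact Finset.sum_congr rfl fun k _ => trace_form M (x k)

/-- case (ii) extraction. From `X̄ ∈ S^n_+` with `H • X̄ = 1` and a PSD
`Ȳ` with `Ȳ • X̄ = 0`, the rank `r` of `X̄` is at least 1 and there is a rank-one
decomposition `X̄ = Σ xᵢxᵢᵀ` with `Ȳ • xᵢxᵢᵀ = 0` for all `i`, an index `j` with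
`τ = xⱼᵀHxⱼ ≥ 1/r`, and `X̃ = (xⱼ/√τ)(xⱼ/√τ)ᵀ` satisfies `H • X̃ = 1`, `Ȳ • X̃ = 0`. -/
theorem rankOne_solution_case_ii (n : ℕ)
    (H : Matrix (Fin n) (Fin n) ℝ) (hH : H.IsSymm)
    (Xb : Matrix (Fin n) (Fin n) ℝ) (hXb : Xb.PosSemidef)
    (hHX : (∑ i, ∑ j, H i j * Xb i j) = 1)
    (Yb : Matrix (Fin n) (Fin n) ℝ) (hYb : Yb.PosSemidef)
    (hYX : (∑ i, ∑ j, Yb i j * Xb i j) = 0) :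
    1 ≤ Xb.rank ∧
    ∃ (x : Fin Xb.rank → Fin n → ℝ) (j : Fin Xb.rank) (τ : ℝ),
      Xb = ∑ i, vecMulVec (x i) (x i) ∧
      (∀ i, (∑ a, ∑ b, Yb a b * vecMulVec (x i) (x i) a b) = 0) ∧
      τ = (x j) ⬝ᵥ H.mulVec (x j) ∧
      1 / (Xb.rank : ℝ) ≤ τ ∧
      (∑ a, ∑ b, H a b *
        vecMulVec ((Real.sqrt τ)⁻¹ • x j) ((Real.sqrt τ)⁻¹ • x j) a b) = 1 ∧
      (∑ a, ∑ b, Yb a b *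
        vecMulVec ((Real.sqrt τ)⁻¹ • x j) ((Real.sqrt τ)⁻¹ • x j) a b) = 0 := by
  classical
  have hherm := hXb.1
  have hdnn : ∀ i, 0 ≤ hherm.eigenvalues i := hXb.eigenvalues_nonneg
  set d := hherm.eigenvalues with hd
  set U := (hherm.eigenvectorUnitary : Matrix (Fin n) (Fin n) ℝ) with hU
  have hspec : ∀ a b, Xb a b = ∑ i, d i * (U a i * U b i) := by
    intro a b
    conv_lhs => rw [hherm.spectral_theorem]
    simp only [Matrix.mul_apply, Matrix.star_apply, star_trivial, Matrix.diagonal_apply,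
      Unitary.conjStarAlgAut_apply, Finset.sum_mul, Finset.mul_sum, ite_mul, zero_mul, Finset.sum_ite_eq, Finset.sum_ite_eq',
      mul_ite, mul_zero, Finset.mem_univ, if_true, Function.comp_apply, RCLike.ofReal_real_eq_id,
      id_eq]
    exact Finset.sum_congr rfl fun i _ => by ring
  have hcard : Fintype.card {i : Fin n // d i ≠ 0} = Xb.rank :=
    hherm.rank_eq_card_non_zero_eigs.symm
  let f : Fin Xb.rank ≃ {i : Fin n // d i ≠ 0} := (Fintype.equivFinOfCardEq hcard).symm
  set x : Fin Xb.rank → Fin n → ℝ := fun k a => Real.sqrt (d (f k)) * U a (f k) with hx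
  have hXdec : Xb = ∑ k, vecMulVec (x k) (x k) := by
    ext a b
    rw [Matrix.sum_apply, hspec a b]
    have hterm : ∀ k, vecMulVec (x k) (x k) a b = d ↑(f k) * (U a ↑(f k) * U b ↑(f k)) := by
      intro k
      simp only [vecMulVec_apply, hx]
      rw [show Real.sqrt (d ↑(f k)) * U a ↑(f k) * (Real.sqrt (d ↑(f k)) * U b ↑(f k))
          = (Real.sqrt (d ↑(f k)) * Real.sqrt (d ↑(f k))) * (U a ↑(f k) * U b ↑(f k)) by ring,
        Real.mul_self_sqrt (hdnn (f k))]
    rw [Finset.sum_congr rfl fun k _ => hterm k]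
    rw [Equiv.sum_comp f (fun i : {i : Fin n // d i ≠ 0} => d ↑i * (U a ↑i * U b ↑i))]
    rw [← Finset.sum_subtype (Finset.univ.filter (fun i : Fin n => d i ≠ 0))
      (by simp) (fun i => d i * (U a i * U b i))]
    rw [Finset.sum_filter_of_ne]
    intro i _ hne hdz
    exact hne (by rw [hdz, zero_mul])
  have hHT : (∑ k, x k ⬝ᵥ H.mulVec (x k)) = 1 := by
    rw [← trace_form_sum H x, ← hXdec]; exact hHX
  have hYT : (∑ k, x k ⬝ᵥ Yb.mulVec (x k)) = 0 := by
    rw [← trace_form_sum Yb x, ← hXdec]; exact hYX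
  have hYnn : ∀ k, 0 ≤ x k ⬝ᵥ Yb.mulVec (x k) := fun k => by
    simpa using hYb.dotProduct_mulVec_nonneg (x k)
  have hYzero : ∀ k, x k ⬝ᵥ Yb.mulVec (x k) = 0 := fun k =>
    (Finset.sum_eq_zero_iff_of_nonneg (fun i _ => hYnn i)).mp hYT k (Finset.mem_univ k)
  have hr1 : 1 ≤ Xb.rank := by
    by_contra h
    push_neg at h
    have h0 : Xb.rank = 0 := Nat.lt_one_iff.mp h
    haveI : IsEmpty (Fin Xb.rank) := by rw [h0]; infer_instance
    rw [Finset.univ_eq_empty, Finset.sum_empty] at hHT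
    exact zero_ne_one hHT
  have hrpos : (0 : ℝ) < (Xb.rank : ℝ) := by exact_mod_cast hr1
  have hne : (Finset.univ : Finset (Fin Xb.rank)).Nonempty := by
    haveI : NeZero Xb.rank := ⟨by omega⟩
    exact Finset.univ_nonempty
  obtain ⟨j, _, hj⟩ := Finset.exists_le_of_sum_le (f := fun _ => 1 / (Xb.rank : ℝ))
    (g := fun k => x k ⬝ᵥ H.mulVec (x k)) hne (by
      rw [hHT, Finset.sum_const, Finset.card_univ, Fintype.card_fin, nsmul_eq_mul]
      rw [mul_one_div, div_self hrpos.ne'])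
  refine ⟨hr1, x, j, x j ⬝ᵥ H.mulVec (x j), hXdec, fun i => by rw [trace_form]; exact hYzero i,
    rfl, hj, ?_, ?_⟩
  · set τ := x j ⬝ᵥ H.mulVec (x j) with hτ
    have hτpos : 0 < τ := lt_of_lt_of_le (by positivity) hj
    rw [trace_form, smul_dotProduct, mulVec_smul, dotProduct_smul, smul_eq_mul, smul_eq_mul,
      ← mul_assoc, ← mul_inv, Real.mul_self_sqrt hτpos.le, ← hτ]
    exact inv_mul_cancel₀ hτpos.ne'
  · set τ := x j ⬝ᵥ H.mulVec (x j) with hτ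
    rw [trace_form, smul_dotProduct, mulVec_smul, dotProduct_smul, smul_eq_mul, smul_eq_mul,
      hYzero j, mul_zero, mul_zero]
end
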